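/- arXiv:2104.06050 — 10 statements merged into one kernel-verified Lean document; each statement's English description precedes it below -/
import Mathlib

section
/- Let k ≥ 1 be an integer, b a positive real number, and λ a real number with 0 < λ/k < 1. Define q_i = (1 − λ/k)^{k−i} · (λ/k) / (1 − (1 − λ/k)^k) for 1 ≤ i ≤ k. Then ∑_{i=1}^{k} (b + i − 1)·q_i ≤ b − k/λ + k/(1 − (1 − λ/k)^k). -/
open Finset

lemma aux_geom (r : ℝ) : ∀ k : ℕ, (1 - r) * ∑ i ∈ Finset.Icc 1 k, r ^ (k - i) = 1 - r ^ k := by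
  intro k
  induction k with
  | zero => simp
  | succ n ih =>
    rw [Finset.sum_Icc_succ_top (by omega)]
    have h : ∑ i ∈ Finset.Icc 1 n, r ^ (n + 1 - i) = r * ∑ i ∈ Finset.Icc 1 n, r ^ (n - i) := by
      rw [Finset.mul_sum]
      apply Finset.sum_congr rfl
      intro i hi
      simp only [Finset.mem_Icc] at hi
      rw [← pow_succ']
      congr 1
      omega
    rw [h]
    simp only [Nat.sub_self, pow_zero, pow_succ]
    linear_combination r * ih

lemma aux_lin (r : ℝ) : ∀ k : ℕ,
    (1 - r) ^ 2 * ∑ i ∈ Finset.Icc 1 k, ((i : ℝ) - 1) * r ^ (k - i)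
      = (k : ℝ) - 1 - k * r + r ^ k := by
  intro k
  induction k with
  | zero => simp
  | succ n ih =>
    rw [Finset.sum_Icc_succ_top (by omega)]
    have h : ∑ i ∈ Finset.Icc 1 n, ((i : ℝ) - 1) * r ^ (n + 1 - i)
        = r * ∑ i ∈ Finset.Icc 1 n, ((i : ℝ) - 1) * r ^ (n - i) := by
      rw [Finset.mul_sum]
      apply Finset.sum_congr rfl
      intro i hi
      simp only [Finset.mem_Icc] at hi
      rw [show n + 1 - i = (n - i) + 1 by omega, pow_succ]
      ring
    rw [h]
    simp only [Nat.sub_self, pow_zero, pow_succ]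
    push_cast
    linear_combination r * ih

/-- Expected-cost bound for the CostRobust distribution `q`:
`∑_{i=1}^{k} (b + i − 1) q_i ≤ b − k/λ + k/(1 − (1 − λ/k)^k)`. -/
theorem costRobust_q_expected_cost (k : ℕ) (hk : 1 ≤ k) (b : ℝ) (hb : 0 < b) (lam : ℝ)
    (h₀ : 0 < lam / k) (h₁ : lam / k < 1)
    (q : ℕ → ℝ)
    (hq : ∀ i ∈ Finset.Icc 1 k,
      q i = (1 - lam / k) ^ (k - i) * (lam / k) / (1 - (1 - lam / k) ^ k)) :
    ∑ i ∈ Finset.Icc 1 k, (b + i - 1) * q i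
      ≤ b - k / lam + k / (1 - (1 - lam / k) ^ k) := by
  set r : ℝ := 1 - lam / k with hr
  have hk0 : (0 : ℝ) < k := by exact_mod_cast Nat.pos_of_ne_zero (by omega)
  have hlam : 0 < lam := by
    have := mul_pos h₀ hk0
    rwa [div_mul_cancel₀ _ (ne_of_gt hk0)] at this
  have hr0 : 0 ≤ r := by simp [hr]; linarith
  have hr1 : r < 1 := by simp [hr]; linarith
  have hrk : r ^ k < 1 := pow_lt_one₀ hr0 hr1 (by omega)
  have hD : 0 < 1 - r ^ k := by linarith
  have hstep : ∑ i ∈ Finset.Icc 1 k, (b + i - 1) * q i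
      = (lam / k) / (1 - r ^ k) *
        (b * ∑ i ∈ Finset.Icc 1 k, r ^ (k - i)
          + ∑ i ∈ Finset.Icc 1 k, ((i : ℝ) - 1) * r ^ (k - i)) := by
    rw [Finset.mul_sum, mul_add, Finset.mul_sum, Finset.mul_sum, ← Finset.sum_add_distrib]
    apply Finset.sum_congr rfl
    intro i hi
    rw [hq i hi]
    ring
  rw [hstep]
  apply le_of_eq
  have hA := aux_geom r k
  have hB := aux_lin r k
  have h1r : 1 - r = lam / k := by simp [hr]
  have hlk : lam / k ≠ 0 := ne_of_gt h₀
  have hDne : 1 - r ^ k ≠ 0 := ne_of_gt hD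
  have hlamne : lam ≠ 0 := ne_of_gt hlam
  have hkne : (k : ℝ) ≠ 0 := ne_of_gt hk0
  have hlamk : lam = (k : ℝ) - k * r := by
    field_simp [hr]
    rw [h1r]; field_simp
  clear_value r
  field_simp
  rw [h1r] at hA hB
  field_simp at hA hB
  linear_combination b * lam * hA + hB
    - (k : ℝ) ^ 2 * hlamk
end

section
/- Let b ≥ 2 be an integer and λ ∈ (1/b, 1] a real number. Set k = ⌊λb⌋ and define q_i = (1 − λ/k)^{k−i} · (λ/k) / (1 − (1 − λ/k)^k) for 1 ≤ i ≤ k. Then ∑_{i=1}^{k} (b + i − 1)·q_i ≤ (λ/(1 − e^{−λ}))·b. -/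
open Finset Real

lemma costRobust_sum_identity (a r : ℝ) (n : ℕ) :
    (1 - r) ^ 2 * ∑ j ∈ Finset.range n, (a + j) * r ^ (n - 1 - j)
      = (a * (1 - r) - 1) * (1 - r ^ n) + n * (1 - r) := by
  induction n with
  | zero => simp
  | succ m ih =>
    have hstep : ∑ j ∈ Finset.range (m + 1), (a + j) * r ^ (m + 1 - 1 - j)
        = r * ∑ j ∈ Finset.range m, (a + j) * r ^ (m - 1 - j) + (a + m) := by
      rw [Finset.sum_range_succ, Finset.mul_sum]
      congr 1
      · refine Finset.sum_congr rfl fun j hj => ?_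
        have hj' : j < m := Finset.mem_range.mp hj
        have : m + 1 - 1 - j = (m - 1 - j) + 1 := by omega
        rw [this]; ring
      · simp
    rw [hstep]
    push_cast
    linear_combination r * ih

/-- Case `y ≥ b`, `x ≥ k` of Theorem 2: the expected cost of the CostRobust
randomized algorithm is at most `(λ/(1 − e^{−λ}))·b`. -/
theorem costRobust_consistency_case1 (b : ℕ) (hb : 2 ≤ b) (lam : ℝ)
    (hlam₁ : 1 / (b : ℝ) < lam) (hlam₂ : lam ≤ 1)
    (k : ℤ) (hk : k = ⌊lam * (b : ℝ)⌋)
    (q : ℤ → ℝ)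
    (hq : ∀ i ∈ Finset.Icc 1 k,
      q i = (1 - lam / (k : ℝ)) ^ (k - i) * (lam / (k : ℝ)) / (1 - (1 - lam / (k : ℝ)) ^ k)) :
    ∑ i ∈ Finset.Icc 1 k, ((b : ℝ) + (i : ℝ) - 1) * q i
      ≤ (lam / (1 - Real.exp (-lam))) * (b : ℝ) := by
  have hb0 : (0:ℝ) < b := by positivity
  have hb2 : (2:ℝ) ≤ b := by exact_mod_cast hb
  have hlam0 : 0 < lam := lt_trans (by positivity) hlam₁
  have hlb : 1 < lam * b := by
    have := (div_lt_iff₀ hb0).mp hlam₁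
    linarith
  have hk1 : 1 ≤ k := by
    rw [hk]
    exact Int.le_floor.mpr (by exact_mod_cast hlb.le)
  set n : ℕ := k.toNat with hn
  have hkn : k = (n : ℤ) := by omega
  have hn1 : 1 ≤ n := by omega
  have hn0 : (0:ℝ) < n := by exact_mod_cast hn1
  have hkr : (k : ℝ) = (n : ℝ) := by exact_mod_cast hkn
  have hlamn : lam ≤ n := by
    rcases eq_or_lt_of_le hlam₂ with h1 | h1
    · have hkb' : k = (b : ℤ) := by
        rw [hk, h1, one_mul, Int.floor_natCast]
      have hbn : (b : ℤ) ≤ (n : ℤ) := by omega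
      have hbn' : (b:ℝ) ≤ n := by exact_mod_cast hbn
      linarith
    · have h2 : (1:ℝ) ≤ n := by exact_mod_cast hn1
      linarith
  set r : ℝ := 1 - lam / n with hrdef
  set s : ℝ := lam / n with hsdef
  have hs0 : 0 < s := by rw [hsdef]; positivity
  have hr0 : 0 ≤ r := by
    rw [hrdef, sub_nonneg, hsdef, div_le_one hn0]; exact hlamn
  have hr1 : r < 1 := by rw [hrdef]; linarith
  have hrE : r ^ n ≤ Real.exp (-lam) := by
    have h1 : r ≤ Real.exp (-s) := by
      have := Real.add_one_le_exp (-s)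
      rw [hrdef]; linarith
    calc r ^ n ≤ (Real.exp (-s)) ^ n := pow_le_pow_left₀ hr0 h1 n
      _ = Real.exp (-lam) := by
          rw [← Real.exp_nat_mul]
          congr 1
          rw [hsdef]
          field_simp
  have hE1 : Real.exp (-lam) < 1 := Real.exp_lt_one_iff.mpr (by linarith)
  set v : ℝ := 1 - Real.exp (-lam) with hvdef
  have hv0 : 0 < v := by rw [hvdef]; linarith
  have hrn1 : r ^ n < 1 := pow_lt_one₀ hr0 hr1 (by omega)
  set u : ℝ := 1 - r ^ n with hudef
  have hu0 : 0 < u := by rw [hudef]; linarith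
  have hvu : v ≤ u := by rw [hudef, hvdef]; linarith [hrE]
  have hEv : lam - v ≥ 0 := by
    have := Real.add_one_le_exp (-lam)
    rw [hvdef]; linarith
  have hkb : (n:ℝ) ≤ lam * b := by
    have h5 : (k:ℝ) ≤ lam * b := by rw [hk]; exact Int.floor_le _
    rw [← hkr]; exact h5
  have hkzpow : (1 - lam / (k:ℝ)) ^ k = r ^ n := by
    rw [hkr, hkn, zpow_natCast, ← hsdef, ← hrdef]
  have key : ∑ i ∈ Finset.Icc 1 k, ((b : ℝ) + (i : ℝ) - 1) * q i
      = ∑ j ∈ Finset.range n, ((b:ℝ) + j) * r ^ (n - 1 - j) * (s / u) := by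
    refine Finset.sum_nbij' (fun i => (i - 1).toNat) (fun j => (j : ℤ) + 1) ?_ ?_ ?_ ?_ ?_
    · intro i hi
      simp only [Finset.mem_Icc] at hi
      simp only [Finset.mem_range]
      omega
    · intro j hj
      simp only [Finset.mem_range] at hj
      simp only [Finset.mem_Icc]
      omega
    · intro i hi
      simp only [Finset.mem_Icc] at hi
      show ((i - 1).toNat : ℤ) + 1 = i
      omega
    · intro j hj
      simp only [Finset.mem_range] at hj
      show ((j : ℤ) + 1 - 1).toNat = j
      omega
    · intro i hi
      have hi' := Finset.mem_Icc.mp hi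
      rw [hq i hi, hkzpow]
      have h1 : (1 - lam / (k:ℝ)) ^ (k - i) = r ^ (n - 1 - (i - 1).toNat) := by
        rw [hkr, ← hsdef, ← hrdef]
        have h2 : k - i = ((n - 1 - (i - 1).toNat : ℕ) : ℤ) := by omega
        rw [h2, zpow_natCast]
      rw [h1, hkr, ← hsdef, ← hudef]
      show ((b : ℝ) + i - 1) * (r ^ (n - 1 - (i - 1).toNat) * s / u)
        = ((b:ℝ) + ((i - 1).toNat : ℕ)) * r ^ (n - 1 - (i - 1).toNat) * (s / u)
      have h4 : (((i - 1).toNat : ℕ) : ℝ) = (i : ℝ) - 1 := by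
        have h5 : ((i - 1).toNat : ℤ) = i - 1 := by omega
        exact_mod_cast congrArg (fun z : ℤ => (z : ℝ)) h5
      rw [h4]
      ring
  rw [key, ← Finset.sum_mul]
  set S : ℝ := ∑ j ∈ Finset.range n, ((b:ℝ) + j) * r ^ (n - 1 - j) with hSdef
  have hid : s ^ 2 * S = ((b:ℝ) * s - 1) * u + n * s := by
    have h := costRobust_sum_identity (b:ℝ) r n
    have hsr : 1 - r = s := by rw [hrdef]; ring
    rw [hsr, ← hudef, ← hSdef] at h
    exact h
  have hone : 1 / s = (n:ℝ) / lam := by rw [hsdef, one_div_div]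
  clear_value S u v s r n
  clear hq hk hkzpow key
  have hTot : S * (s / u) = (b:ℝ) - 1 / s + (n:ℝ) / u := by
    field_simp
    linear_combination hid
  rw [hTot, hone]
  have hstep1 : (n:ℝ) / u ≤ (n:ℝ) / v := by gcongr
  have hfinal : (b:ℝ) - (n:ℝ)/lam + (n:ℝ)/v ≤ lam / v * b := by
    have h1 : (n:ℝ)/lam * lam = n := div_mul_cancel₀ _ (ne_of_gt hlam0)
    have h2 : (n:ℝ)/v * v = n := div_mul_cancel₀ _ (ne_of_gt hv0)
    have h3 : lam / v * (b:ℝ) * v = lam * b := by field_simp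
    have hkey : (lam - v) * (lam * b - n) ≥ 0 := mul_nonneg hEv (by linarith)
    nlinarith [h1, h2, h3, mul_pos hlam0 hv0]
  linarith
end

section
/- Let b ≥ 2 be an integer and λ ∈ (1/b, 1] a real number. Set k = ⌊λb⌋, suppose k ≥ 2, and define q_i = (1 − λ/k)^{k−i} · (λ/k) / (1 − (1 − λ/k)^k) for 1 ≤ i ≤ k. Then for every integer x with 1 ≤ x < k, ∑_{i=1}^{x} (b + i − 1)·q_i + x·∑_{i=x+1}^{k} q_i ≤ ((1 + 1/⌊λb⌋)/(1 − e^{−λ}))·x. -/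
open Finset Real

lemma geom_aux (r : ℝ) (hr : r ≠ 1) (n : ℕ) :
    (1 - r) * ∑ j ∈ Finset.range n, r ^ j = 1 - r ^ n := by
  rw [geom_sum_eq hr n]
  have : r - 1 ≠ 0 := sub_ne_zero.mpr hr
  field_simp
  ring

lemma arith_geom_aux (b r : ℝ) (hr : (1:ℝ) - r ≠ 0) (n : ℕ) :
    (1 - r) * ∑ j ∈ Finset.range (n+1), (b + j) * r ^ (n - j)
      = ((n:ℝ)+1) + (b - 1/(1-r)) * (1 - r ^ n) + r ^ n * (b * (1-r) - 1) := by
  induction n with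
  | zero => simp; ring
  | succ n ih =>
    have h2 : ∀ j ∈ Finset.range (n+1), (b + (j:ℝ)) * r ^ (n + 1 - j)
        = ((b + (j:ℝ)) * r ^ (n - j)) * r := by
      intro j hj
      have hj' := Finset.mem_range.mp hj
      rw [show n + 1 - j = (n - j) + 1 by omega, pow_succ]; ring
    have h1 : ∑ j ∈ Finset.range (n+2), (b + (j:ℝ)) * r ^ (n + 1 - j)
        = (∑ j ∈ Finset.range (n+1), (b + (j:ℝ)) * r ^ (n - j)) * r + (b + ((n:ℝ)+1)) := by
      rw [Finset.sum_range_succ, Finset.sum_congr rfl h2, ← Finset.sum_mul]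
      push_cast; simp
    push_cast
    rw [show n + 1 + 1 = n + 2 from rfl, h1, mul_add,
      show (1-r) * ((∑ j ∈ Finset.range (n+1), (b + (j:ℝ)) * r ^ (n - j)) * r)
        = ((1-r) * ∑ j ∈ Finset.range (n+1), (b + (j:ℝ)) * r ^ (n - j)) * r by ring, ih]
    field_simp
    ring

lemma sum_Icc_int (f : ℤ → ℝ) (a : ℤ) (n : ℕ) :
    ∑ i ∈ Finset.Icc a (a + n - 1), f i = ∑ j ∈ Finset.range n, f (a + j) := by
  induction n with
  | zero => simp
  | succ n ih =>
    rw [Finset.sum_range_succ, ← ih,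
      show a + ((n:ℕ)+1:ℕ) - 1 = (a + (n:ℕ) - 1) + 1 by push_cast; ring,
      show Finset.Icc a (a + (n:ℕ) - 1 + 1) = insert (a + (n:ℕ) - 1 + 1) (Finset.Icc a (a + (n:ℕ) - 1)) by
        ext i; simp only [Finset.mem_Icc, Finset.mem_insert]; omega,
      Finset.sum_insert (by simp only [Finset.mem_Icc]; omega), add_comm]
    congr 2
    omega

/-- Case `y ≥ b`, `x < k` of Theorem 2 (robustness side): the expected cost of
the CostRobust randomized algorithm is at most `((1 + 1/⌊λb⌋)/(1 − e^{−λ}))·x`. -/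
theorem costRobust_robustness_case2 (b : ℕ) (hb : 2 ≤ b) (lam : ℝ)
    (hlam₁ : 1 / (b : ℝ) < lam) (hlam₂ : lam ≤ 1)
    (k : ℤ) (hk : k = ⌊lam * (b : ℝ)⌋) (hk2 : 2 ≤ k)
    (q : ℤ → ℝ)
    (hq : ∀ i ∈ Finset.Icc 1 k,
      q i = (1 - lam / (k : ℝ)) ^ (k - i) * (lam / (k : ℝ)) / (1 - (1 - lam / (k : ℝ)) ^ k))
    (x : ℤ) (hx1 : 1 ≤ x) (hxk : x < k) :
    ∑ i ∈ Finset.Icc 1 x, ((b : ℝ) + (i : ℝ) - 1) * q i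
        + (x : ℝ) * ∑ i ∈ Finset.Icc (x + 1) k, q i
      ≤ ((1 + 1 / (⌊lam * (b : ℝ)⌋ : ℝ)) / (1 - Real.exp (-lam))) * (x : ℝ) := by
  have hbR : (2:ℝ) ≤ (b:ℝ) := by exact_mod_cast hb
  have hlam0 : 0 < lam := lt_trans (by positivity) hlam₁
  have hkR2 : (2:ℝ) ≤ (k:ℝ) := by exact_mod_cast hk2
  have hk0 : (0:ℝ) < (k:ℝ) := by linarith
  set p : ℝ := lam / (k:ℝ) with hp_def
  have hp0 : 0 < p := div_pos hlam0 hk0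
  have hp_half : p ≤ 1/2 := by
    rw [hp_def, div_le_iff₀ hk0]; nlinarith
  set r : ℝ := 1 - p with hr_def
  clear_value p r
  have h1r : 1 - r = p := by rw [hr_def]; ring
  have hr0 : (0:ℝ) ≤ r := by rw [hr_def]; linarith
  have hr1 : r < 1 := by rw [hr_def]; linarith
  have hrne1 : r ≠ 1 := ne_of_lt hr1
  obtain ⟨K, hKk⟩ : ∃ K : ℕ, (K:ℤ) = k := ⟨k.toNat, Int.toNat_of_nonneg (by omega)⟩
  obtain ⟨X, hXx⟩ : ∃ X : ℕ, (X:ℤ) = x := ⟨x.toNat, Int.toNat_of_nonneg (by omega)⟩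
  have hXK : X < K := by omega
  have hX1 : 1 ≤ X := by omega
  have hK2 : 2 ≤ K := by omega
  have hKkR : ((K:ℕ):ℝ) = (k:ℝ) := by exact_mod_cast hKk
  have hXxR : ((X:ℕ):ℝ) = (x:ℝ) := by exact_mod_cast hXx
  set SA : ℝ := ∑ j ∈ Finset.range X, ((b:ℝ) + j) * r ^ (X - 1 - j) with hSA_def
  set SB : ℝ := ∑ j ∈ Finset.range (K - X), r ^ j with hSB_def
  clear_value SA SB
  have hD0 : 0 < 1 - r ^ K := by
    have : r ^ K < 1 := pow_lt_one₀ hr0 hr1 (by omega)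
    linarith
  -- rewrite the first sum
  have e1 : ∑ i ∈ Finset.Icc (1:ℤ) x, ((b:ℝ) + (i:ℝ) - 1) * q i
      = r ^ (K - X) * p / (1 - r ^ K) * SA := by
    have h0 := sum_Icc_int (fun i => ((b:ℝ) + (i:ℝ) - 1) * q i) 1 X
    rw [show (1:ℤ) + (X:ℤ) - 1 = x by omega] at h0
    rw [h0, hSA_def, Finset.mul_sum]
    apply Finset.sum_congr rfl
    intro j hj
    have hj' := Finset.mem_range.mp hj
    rw [hq (1 + (j:ℤ)) (Finset.mem_Icc.mpr ⟨by omega, by omega⟩),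
      show k - (1 + (j:ℤ)) = ((K - 1 - j : ℕ) : ℤ) by omega, zpow_natCast,
      show (k : ℤ) = ((K:ℕ):ℤ) from hKk.symm, zpow_natCast,
      show K - 1 - j = (K - X) + (X - 1 - j) by omega, pow_add]
    push_cast
    ring
  -- rewrite the second sum
  have e2 : ∑ i ∈ Finset.Icc (x+1) k, q i = SB * p / (1 - r ^ K) := by
    have h0 := sum_Icc_int (fun i => q i) (x+1) (K - X)
    rw [show x + 1 + ((K - X : ℕ):ℤ) - 1 = k by omega] at h0
    rw [h0]
    have h1 : ∀ j ∈ Finset.range (K - X), q (x + 1 + (j:ℤ))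
        = r ^ (K - X - 1 - j) * p / (1 - r ^ K) := by
      intro j hj
      have hj' := Finset.mem_range.mp hj
      rw [hq (x + 1 + (j:ℤ)) (Finset.mem_Icc.mpr ⟨by omega, by omega⟩),
        show k - (x + 1 + (j:ℤ)) = ((K - X - 1 - j : ℕ) : ℤ) by omega, zpow_natCast,
        show (k : ℤ) = ((K:ℕ):ℤ) from hKk.symm, zpow_natCast]
    rw [Finset.sum_congr rfl h1]
    rw [show ∀ c d : ℝ, ∑ j ∈ Finset.range (K - X), r ^ (K - X - 1 - j) * c / d
        = (∑ j ∈ Finset.range (K - X), r ^ (K - X - 1 - j)) * c / d by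
      intro c d; rw [← Finset.sum_div, ← Finset.sum_mul]]
    rw [Finset.sum_range_reflect (fun j => r ^ j) (K - X), ← hSB_def]
  rw [e1, e2]
  -- key closed forms
  have hA : p * SA = (X:ℝ) + ((b:ℝ) - 1/p) * (1 - r ^ (X-1)) + r ^ (X-1) * ((b:ℝ)*p - 1) := by
    have h := arith_geom_aux (b:ℝ) r (by rw [h1r]; exact ne_of_gt hp0) (X-1)
    rw [show (X-1)+1 = X by omega, h1r] at h
    rw [hSA_def, h, Nat.cast_sub hX1]
    push_cast
    ring
  have hB : p * SB = 1 - r ^ (K - X) := by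
    have h := geom_aux r hrne1 (K - X)
    rw [h1r, ← hSB_def] at h
    exact h
  -- floor bounds
  have hfloor_le : (k:ℝ) ≤ lam * b := by
    rw [hk]; exact_mod_cast Int.floor_le (lam * (b:ℝ))
  have hfloor_lt : lam * b < (k:ℝ) + 1 := by
    rw [hk]; exact_mod_cast Int.lt_floor_add_one (lam * (b:ℝ))
  have hc_eq : (b:ℝ) - 1/p = (lam * b - k)/lam := by
    rw [hp_def]; field_simp
  have he_eq : (b:ℝ)*p - 1 = (lam * b - k)/(k:ℝ) := by
    rw [hp_def]; field_simp
  set δ : ℝ := lam * (b:ℝ) - (k:ℝ) with hδ_def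
  clear_value δ
  have hδ0 : 0 ≤ δ := by rw [hδ_def]; linarith
  have hδ1 : δ ≤ 1 := by rw [hδ_def]; linarith
  set s : ℝ := r ^ (X - 1) with hs_def
  clear_value s
  have hs0 : 0 ≤ s := by rw [hs_def]; exact pow_nonneg hr0 _
  have hs1 : s ≤ 1 := by rw [hs_def]; exact pow_le_one₀ hr0 hr1.le
  have hbern : 1 - ((X:ℝ) - 1) * p ≤ s := by
    have h := one_add_mul_le_pow (a := -p) (by linarith) (X - 1)
    rw [show (1:ℝ) + -p = r by rw [hr_def]; ring] at h
    rw [hs_def]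
    have hcast : ((X - 1 : ℕ):ℝ) = (X:ℝ) - 1 := by
      rw [Nat.cast_sub hX1]; push_cast; ring
    calc 1 - ((X:ℝ) - 1) * p = 1 + ((X - 1 : ℕ):ℝ) * (-p) := by rw [hcast]; ring
      _ ≤ r ^ (X - 1) := h
  set T : ℝ := ((b:ℝ) - 1/p) * (1 - s) + s * ((b:ℝ)*p - 1) with hT_def
  clear_value T
  have hT0 : 0 ≤ T := by
    rw [hT_def, hc_eq, he_eq]
    have h1 : 0 ≤ (δ/lam) * (1 - s) := mul_nonneg (by positivity) (by linarith)
    have h2 : 0 ≤ s * (δ/(k:ℝ)) := mul_nonneg hs0 (by positivity)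
    linarith
  have hT_le : T ≤ (x:ℝ)/(k:ℝ) := by
    rw [hT_def, hc_eq, he_eq]
    have h1s : 1 - s ≤ ((X:ℝ) - 1) * (lam/(k:ℝ)) := by
      rw [← hp_def]; linarith
    have step1 : (δ/lam) * (1 - s) ≤ δ * ((X:ℝ) - 1) / (k:ℝ) := by
      calc (δ/lam) * (1 - s) ≤ (δ/lam) * (((X:ℝ) - 1) * (lam/(k:ℝ))) :=
            mul_le_mul_of_nonneg_left h1s (by positivity)
        _ = δ * ((X:ℝ) - 1) / (k:ℝ) := by field_simp
    have step2 : s * (δ/(k:ℝ)) ≤ δ/(k:ℝ) :=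
      mul_le_of_le_one_left (div_nonneg hδ0 hk0.le) hs1
    have step3 : δ * ((X:ℝ) - 1) / (k:ℝ) + δ/(k:ℝ) ≤ (x:ℝ)/(k:ℝ) := by
      rw [← add_div, div_le_div_iff₀ hk0 hk0]
      have hXR1 : (1:ℝ) ≤ (X:ℝ) := by exact_mod_cast hX1
      have h9 : δ * (X:ℝ) ≤ 1 * (X:ℝ) := mul_le_mul_of_nonneg_right hδ1 (by positivity)
      have h10 : δ * (X:ℝ) * (k:ℝ) ≤ 1 * (X:ℝ) * (k:ℝ) :=
        mul_le_mul_of_nonneg_right h9 hk0.le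
      have : δ * ((X:ℝ) - 1) + δ = δ * (X:ℝ) := by ring
      rw [this, ← hXxR]
      linarith
    linarith
  have hrKX0 : 0 ≤ r ^ (K - X) := pow_nonneg hr0 _
  have hrKX1 : r ^ (K - X) ≤ 1 := pow_le_one₀ hr0 hr1.le
  have hx0R : (0:ℝ) < (x:ℝ) := by exact_mod_cast lt_of_lt_of_le one_pos hx1
  -- combine
  set N : ℝ := r ^ (K - X) * (p * SA) + (x:ℝ) * (p * SB) with hN_def
  clear_value N
  have hN_eq : N = (x:ℝ) + r ^ (K - X) * T := by
    rw [hN_def, hA, hB, hT_def, hs_def, hXxR]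
    ring
  have hN_le : N ≤ (1 + 1/(k:ℝ)) * (x:ℝ) := by
    rw [hN_eq]
    have h5 : r ^ (K - X) * T ≤ T := mul_le_of_le_one_left hT0 hrKX1
    have h6 : (1 + 1/(k:ℝ)) * (x:ℝ) = (x:ℝ) + (x:ℝ)/(k:ℝ) := by ring
    linarith
  have hN0 : 0 ≤ N := by
    rw [hN_eq]
    have : 0 ≤ r ^ (K - X) * T := mul_nonneg hrKX0 hT0
    linarith
  have hLHS : r ^ (K - X) * p / (1 - r ^ K) * SA + (x:ℝ) * (SB * p / (1 - r ^ K))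
      = N / (1 - r ^ K) := by
    rw [hN_def]; ring
  rw [hLHS]
  -- denominator bound
  have hE1 : Real.exp (-lam) < 1 := by
    calc Real.exp (-lam) < Real.exp 0 := Real.exp_lt_exp.mpr (by linarith)
      _ = 1 := Real.exp_zero
  have hE0 : 0 < 1 - Real.exp (-lam) := by linarith
  have hDE : 1 - Real.exp (-lam) ≤ 1 - r ^ K := by
    have h6 : r ≤ Real.exp (-p) := by
      have := Real.add_one_le_exp (-p)
      rw [hr_def]; linarith
    have h7 : r ^ K ≤ Real.exp (-p) ^ K := pow_le_pow_left₀ hr0 h6 K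
    have h8 : Real.exp (-p) ^ K = Real.exp (-lam) := by
      rw [← Real.exp_nat_mul]
      congr 1
      rw [hp_def]
      field_simp
      rw [hKkR]
    rw [h8] at h7
    linarith
  -- finish
  rw [← hk]
  have hfinal : ((1 + 1/(k:ℝ)) / (1 - Real.exp (-lam))) * (x:ℝ)
      = ((1 + 1/(k:ℝ)) * (x:ℝ)) / (1 - Real.exp (-lam)) := by ring
  rw [hfinal]
  exact div_le_div₀ (by positivity) hN_le hE0 hDE
end

section
/- Let b ≥ 2 be an integer and λ ∈ (1/b, 1] a real number. Set k = ⌊λb⌋, suppose k ≥ 2, and define q_i = (1 − λ/k)^{k−i} · (λ/k) / (1 − (1 − λ/k)^k) for 1 ≤ i ≤ k. Then for every integer x with 1 ≤ x < k, ∑_{i=1}^{x} (b + i − 1)·q_i + x·∑_{i=x+1}^{k} q_i ≤ (λ·b)/(1 − e^{−λ}). -/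
open Finset Real

private lemma icc_split_bot (a k : ℤ) (f : ℤ → ℝ) (h : a ≤ k) :
    ∑ i ∈ Finset.Icc a k, f i = f a + ∑ i ∈ Finset.Icc (a+1) k, f i := by
  have : Finset.Icc a k = insert a (Finset.Icc (a+1) k) := by
    ext j; simp only [mem_Icc, mem_insert]; omega
  rw [this, Finset.sum_insert (by simp)]

private lemma icc_split_top (x : ℤ) (f : ℤ → ℝ) (h : 1 ≤ x + 1) :
    ∑ i ∈ Finset.Icc 1 (x+1), f i = f (x+1) + ∑ i ∈ Finset.Icc 1 x, f i := by
  have : Finset.Icc 1 (x+1) = insert (x+1) (Finset.Icc 1 x) := by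
    ext j; simp only [mem_Icc, mem_insert]; omega
  rw [this, Finset.sum_insert (by simp)]

/-- Geometric tail sum. -/
private lemma tail_sum (r : ℝ) (k : ℤ) :
    ∀ n : ℕ, (n : ℤ) ≤ k →
      ∑ i ∈ Finset.Icc (k - (n : ℤ) + 1) k, r ^ (k - i) * (1 - r) = 1 - r ^ n := by
  intro n
  induction n with
  | zero =>
      intro _
      rw [show k - ((0:ℕ):ℤ) + 1 = k + 1 by push_cast; ring,
        Finset.Icc_eq_empty (by omega)]
      simp
  | succ n ih =>
      intro h
      have h' : (n : ℤ) ≤ k := by push_cast at h ⊢; omega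
      rw [show k - ((n+1:ℕ):ℤ) + 1 = k - (n:ℤ) by push_cast; ring]
      rw [icc_split_bot (k - (n:ℤ)) k _ (by omega)]
      rw [ih h']
      rw [show k - (k - (n:ℤ)) = ((n:ℕ):ℤ) by ring, zpow_natCast]
      ring

/-- Closed form for the weighted geometric sum, by induction. -/
private lemma w_ident (B r : ℝ) (hr : r ≠ 0) (k : ℤ) :
    ∀ x : ℤ, 1 ≤ x →
      (1 - r) * ∑ i ∈ Finset.Icc 1 x, (B + (i:ℝ) - 1) * (r ^ (k - i) * (1 - r))
        = (B * (1 - r) - 1) * (r ^ (k - x) - r ^ k) + (x:ℝ) * ((1 - r) * r ^ (k - x)) := by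
  refine Int.le_induction ?_ ?_
  · rw [Finset.Icc_self, Finset.sum_singleton]
    have e1 : r ^ k = r ^ (k - 1) * r := by
      rw [← zpow_add_one₀ hr]; congr 1; ring
    rw [e1]; push_cast; ring
  · intro x hx ih
    rw [icc_split_top x _ (by omega), mul_add, ih]
    have e1 : r ^ (k - x) = r ^ (k - (x+1)) * r := by
      rw [← zpow_add_one₀ hr]; congr 1; ring
    rw [e1]; push_cast; ring

set_option maxHeartbeats 1000000 in
/-- Case `y ≥ b`, `x < k` of Theorem 2 (consistency side): the expected cost of
the CostRobust randomized algorithm is at most `λ·b/(1 − e^{−λ})`. -/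
theorem costRobust_consistency_case2 (b : ℕ) (hb : 2 ≤ b) (lam : ℝ)
    (hlam₁ : 1 / (b : ℝ) < lam) (hlam₂ : lam ≤ 1)
    (k : ℤ) (hk : k = ⌊lam * (b : ℝ)⌋) (hk2 : 2 ≤ k)
    (q : ℤ → ℝ)
    (hq : ∀ i ∈ Finset.Icc 1 k,
      q i = (1 - lam / (k : ℝ)) ^ (k - i) * (lam / (k : ℝ)) / (1 - (1 - lam / (k : ℝ)) ^ k))
    (x : ℤ) (hx1 : 1 ≤ x) (hxk : x < k) :
    ∑ i ∈ Finset.Icc 1 x, ((b : ℝ) + (i : ℝ) - 1) * q i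
        + (x : ℝ) * ∑ i ∈ Finset.Icc (x + 1) k, q i
      ≤ lam * (b : ℝ) / (1 - Real.exp (-lam)) := by
  set c : ℝ := lam / (k : ℝ) with hc
  set r : ℝ := 1 - c with hrdef
  clear_value c
  have hb2 : (2:ℝ) ≤ (b:ℝ) := by exact_mod_cast hb
  have hbpos : (0:ℝ) < (b:ℝ) := by linarith
  have hlam0 : 0 < lam := lt_trans (by positivity) hlam₁
  have hk2' : (2:ℝ) ≤ (k:ℝ) := by exact_mod_cast hk2
  have hkpos : (0:ℝ) < (k:ℝ) := by linarith
  have hkb : (k:ℝ) ≤ lam * (b:ℝ) := by rw [hk]; exact Int.floor_le _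
  have hc0 : 0 < c := hc ▸ div_pos hlam0 hkpos
  have hc1 : c < 1 := by
    rw [hc, div_lt_one hkpos]; linarith
  clear_value r
  have hr0 : 0 < r := by rw [hrdef]; linarith
  have hr1 : r < 1 := by rw [hrdef]; linarith
  have hrne : r ≠ 0 := ne_of_gt hr0
  have hcr : 1 - r = c := by rw [hrdef]; ring
  have hck : c * (k:ℝ) = lam := by rw [hc]; field_simp
  set K : ℕ := k.toNat with hK
  clear_value K
  have hKk : ((K:ℕ):ℤ) = k := hK ▸ Int.toNat_of_nonneg (by omega)
  have hKr : ((K:ℕ):ℝ) = (k:ℝ) := by exact_mod_cast hKk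
  have hrk : r ^ (k:ℤ) = r ^ K := by rw [← hKk, zpow_natCast]
  -- r^k ≤ exp(-lam)
  have hre : r ≤ Real.exp (-c) := by
    have := Real.add_one_le_exp (-c); rw [hrdef]; linarith
  have hrk_exp : r ^ (k:ℤ) ≤ Real.exp (-lam) := by
    rw [hrk]
    calc r ^ K ≤ (Real.exp (-c)) ^ K := pow_le_pow_left₀ hr0.le hre K
      _ = Real.exp ((K:ℝ) * (-c)) := (Real.exp_nat_mul _ K).symm
      _ = Real.exp (-lam) := by rw [hKr]; congr 1; rw [← hck]; ring
  have hQe : 0 < 1 - Real.exp (-lam) := by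
    have : Real.exp (-lam) < Real.exp 0 := Real.exp_lt_exp.mpr (by linarith)
    rw [Real.exp_zero] at this; linarith
  have hQ : 1 - Real.exp (-lam) ≤ 1 - r ^ (k:ℤ) := by linarith
  have hQpos : 0 < 1 - r ^ (k:ℤ) := lt_of_lt_of_le hQe hQ
  -- Bernoulli: 1 - lam ≤ r^k, hence 1 - r^k ≤ lam
  have hbern : 1 - lam ≤ r ^ (k:ℤ) := by
    rw [hrk]
    have h := one_add_mul_le_pow (a := -c) (by linarith) K
    have e : (1 + -c) = r := by rw [hrdef]; ring
    rw [e] at h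
    have : 1 + (K:ℝ) * (-c) = 1 - lam := by rw [hKr, ← hck]; ring
    linarith
  have h1rk : 1 - r ^ (k:ℤ) ≤ lam := by linarith
  -- nonnegativity / bounds for g := r^(k-x) - r^k
  have hrkx1 : r ^ (k - x) ≤ 1 := by
    have hcast : (((k-x).toNat : ℕ) : ℤ) = k - x := Int.toNat_of_nonneg (by omega)
    rw [← hcast, zpow_natCast]
    exact pow_le_one₀ hr0.le hr1.le
  have hrx1 : r ^ (x:ℤ) ≤ 1 := by
    have hcast : ((x.toNat : ℕ) : ℤ) = x := Int.toNat_of_nonneg (by omega)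
    rw [← hcast, zpow_natCast]
    exact pow_le_one₀ hr0.le hr1.le
  have hrkx0 : 0 ≤ r ^ (k - x) := le_of_lt (zpow_pos hr0 _)
  have hg0 : 0 ≤ r ^ (k - x) - r ^ (k:ℤ) := by
    have e2 : r ^ (k:ℤ) = r ^ (k - x) * r ^ (x:ℤ) := by
      rw [← zpow_add₀ hrne]; congr 1; ring
    nlinarith
  have hgl : r ^ (k - x) - r ^ (k:ℤ) ≤ lam := by linarith
  -- rewrite the two sums
  have hsum1 : ∑ i ∈ Finset.Icc 1 x, ((b : ℝ) + (i : ℝ) - 1) * q i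
      = (∑ i ∈ Finset.Icc 1 x, ((b : ℝ) + (i : ℝ) - 1) * (r ^ (k - i) * c))
          / (1 - r ^ (k:ℤ)) := by
    rw [Finset.sum_div]
    refine Finset.sum_congr rfl ?_
    intro i hi
    simp only [mem_Icc] at hi
    rw [hq i (by simp only [mem_Icc]; omega)]
    ring
  have hsum2 : ∑ i ∈ Finset.Icc (x+1) k, q i
      = (1 - r ^ (k - x)) / (1 - r ^ (k:ℤ)) := by
    have e0 : ∑ i ∈ Finset.Icc (x+1) k, q i
        = (∑ i ∈ Finset.Icc (x+1) k, r ^ (k - i) * c) / (1 - r ^ (k:ℤ)) := by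
      rw [Finset.sum_div]
      refine Finset.sum_congr rfl ?_
      intro i hi
      simp only [mem_Icc] at hi
      rw [hq i (by simp only [mem_Icc]; omega)]
    rw [e0]
    congr 1
    have hcast : (((k-x).toNat : ℕ) : ℤ) = k - x := Int.toNat_of_nonneg (by omega)
    have ht := tail_sum r k (k-x).toNat (by omega)
    rw [hcast, show k - (k - x) + 1 = x + 1 by ring, hcr] at ht
    rw [ht, ← zpow_natCast r, hcast]
  have W := w_ident ((b:ℝ)) r hrne k x hx1
  rw [hcr] at W
  set S : ℝ := ∑ i ∈ Finset.Icc 1 x, ((b : ℝ) + (i : ℝ) - 1) * (r ^ (k - i) * c) with hS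
  clear_value S
  set N : ℝ := S + (x:ℝ) * (1 - r ^ (k - x)) with hN
  clear_value N
  have hcN : c * N = ((b:ℝ) * c - 1) * (r ^ (k - x) - r ^ (k:ℤ)) + (x:ℝ) * c := by
    rw [hN, mul_add, W]; ring
  have hbc1 : 1 ≤ (b:ℝ) * c := by
    have : (k:ℝ) ≤ (b:ℝ) * c * (k:ℝ) := by rw [mul_assoc, hck]; linarith [hkb]
    nlinarith
  have hxk' : (x:ℝ) ≤ (k:ℝ) - 1 := by
    have : (x:ℝ) + 1 ≤ (k:ℝ) := by exact_mod_cast (by omega : x + 1 ≤ k)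
    linarith
  have hNle : N ≤ lam * (b:ℝ) := by
    have h1 : ((b:ℝ) * c - 1) * (r ^ (k - x) - r ^ (k:ℤ)) ≤ ((b:ℝ) * c - 1) * lam :=
      mul_le_mul_of_nonneg_left hgl (by linarith)
    have hxkR : (x:ℝ) ≤ (k:ℝ) := by linarith
    have h2 : (x:ℝ) * c ≤ c * (k:ℝ) := by
      rw [mul_comm]; exact mul_le_mul_of_nonneg_left hxkR hc0.le
    have h3 : c * N ≤ c * (lam * (b:ℝ)) := by
      have e : ((b:ℝ) * c - 1) * lam + c * (k:ℝ) = c * (lam * (b:ℝ)) := by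
        rw [hck]; ring
      linarith [hcN, h1, h2]
    exact le_of_mul_le_mul_left h3 hc0
  have hN0 : 0 ≤ N := by
    have hx0 : (0:ℝ) ≤ (x:ℝ) := by exact_mod_cast (by omega : (0:ℤ) ≤ x)
    have : 0 ≤ c * N := by rw [hcN]; nlinarith
    nlinarith
  rw [hsum1, hsum2]
  have e : S / (1 - r ^ (k:ℤ)) + (x:ℝ) * ((1 - r ^ (k - x)) / (1 - r ^ (k:ℤ)))
      = N / (1 - r ^ (k:ℤ)) := by rw [hN]; ring
  rw [e]
  exact div_le_div₀ (by positivity) hNle hQe hQ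
end

section
/- Let b ≥ 2 be an integer and λ ∈ (1/b, 1] a real number. Set l = ⌈b/λ⌉ and define r_i = (1 − 1/(λl))^{l−i} · (1/(λl)) / (1 − (1 − 1/(λl))^l) for 1 ≤ i ≤ l. Then for every integer x with 1 ≤ x < l, ∑_{i=1}^{x} (b + i − 1)·r_i + x·∑_{i=x+1}^{l} r_i ≤ x/(1 − e^{−1/λ}). -/
open Finset Real

private lemma Icc_insert_top (a b : ℤ) (h : a ≤ b + 1) :
    Finset.Icc a (b+1) = insert (b+1) (Finset.Icc a b) := by
  ext i; simp only [Finset.mem_Icc, Finset.mem_insert]; omega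

private lemma geomAux (p : ℝ) (hq : (1:ℝ) - p ≠ 0) (l : ℤ) :
    ∀ n : ℕ, (n:ℤ) ≤ l →
      ∑ i ∈ Finset.Icc (l - n + 1) l, (1-p)^(l-i) * p = 1 - (1-p)^(n:ℤ) := by
  intro n
  induction n with
  | zero => intro _; simp
  | succ n ih =>
    intro hn
    have hn' : (n:ℤ) ≤ l := by push_cast at hn ⊢; omega
    have h1 : l - ((n:ℤ)+1) + 1 = l - n := by ring
    have h2 : Finset.Icc (l - (n:ℤ)) l = insert (l - n) (Finset.Icc (l - n + 1) l) := by
      ext i; simp only [Finset.mem_Icc, Finset.mem_insert]; omega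
    have h3 : (l - (n:ℤ)) ∉ Finset.Icc (l - (n:ℤ) + 1) l := by
      simp only [Finset.mem_Icc]; omega
    push_cast
    rw [h1, h2, Finset.sum_insert h3, ih hn']
    have h4 : l - (l - (n:ℤ)) = (n:ℤ) := by ring
    rw [h4, zpow_add_one₀ hq]
    ring

private lemma geomSum (p : ℝ) (hq : (1:ℝ) - p ≠ 0) (l x : ℤ) (hx0 : 0 ≤ x) (hxl : x ≤ l) :
    ∑ i ∈ Finset.Icc (x + 1) l, (1-p)^(l-i) * p = 1 - (1-p)^(l-x) := by
  have hn : ((l - x).toNat : ℤ) = l - x := Int.toNat_of_nonneg (by omega)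
  have := geomAux p hq l (l - x).toNat (by omega)
  rw [hn] at this
  have h1 : l - (l - x) + 1 = x + 1 := by ring
  rw [h1] at this
  exact this

private lemma keyIdentity (p : ℝ) (hp : p ≠ 0) (hq : (1:ℝ) - p ≠ 0) (l : ℤ) :
    ∀ x : ℤ, 1 ≤ x → x ≤ l →
      (∑ i ∈ Finset.Icc 1 x, (1/p + (i:ℝ) - 1) * ((1-p)^(l-i) * p))
        + (x:ℝ) * ∑ i ∈ Finset.Icc (x+1) l, (1-p)^(l-i) * p = (x:ℝ) := by
  refine Int.le_induction ?_ ?_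
  · intro h1l
    rw [geomSum p hq l 1 (by omega) h1l]
    rw [show Finset.Icc (1:ℤ) 1 = {1} from rfl, Finset.sum_singleton]
    push_cast
    field_simp
    ring
  · intro x hx ih hxl
    have hx_l : x ≤ l := by omega
    have ihx := ih hx_l
    rw [Icc_insert_top 1 x (by omega), Finset.sum_insert (by simp only [Finset.mem_Icc]; omega)]
    rw [geomSum p hq l (x+1) (by omega) hxl]
    rw [geomSum p hq l x (by omega) hx_l] at ihx
    have hS : ∑ i ∈ Finset.Icc (1:ℤ) x, (1/p + (i:ℝ) - 1) * ((1-p)^(l-i) * p)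
        = (x:ℝ) - (x:ℝ) * (1 - (1-p)^(l-x)) := by linarith
    have hrel : (1-p)^(l-x) = (1-p)^(l-(x+1)) * (1-p) := by
      rw [← zpow_add_one₀ hq]; ring_nf
    rw [hS, hrel]
    push_cast
    field_simp
    ring

/-- Case `y < b`, `x < l` of Theorem 2: the expected cost of the CostRobust
randomized algorithm is at most `x/(1 − e^{−1/λ})`. -/
theorem costRobust_case3 (b : ℕ) (hb : 2 ≤ b) (lam : ℝ)
    (hlam₁ : 1 / (b : ℝ) < lam) (hlam₂ : lam ≤ 1)
    (l : ℤ) (hl : l = ⌈(b : ℝ) / lam⌉)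
    (r : ℤ → ℝ)
    (hr : ∀ i ∈ Finset.Icc 1 l,
      r i = (1 - 1 / (lam * (l : ℝ))) ^ (l - i) * (1 / (lam * (l : ℝ)))
              / (1 - (1 - 1 / (lam * (l : ℝ))) ^ l))
    (x : ℤ) (hx1 : 1 ≤ x) (hxl : x < l) :
    ∑ i ∈ Finset.Icc 1 x, ((b : ℝ) + (i : ℝ) - 1) * r i
        + (x : ℝ) * ∑ i ∈ Finset.Icc (x + 1) l, r i
      ≤ (x : ℝ) / (1 - Real.exp (-(1 / lam))) := by
  have hb0 : (0:ℝ) < b := by positivity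
  have hlam0 : 0 < lam := lt_trans (by positivity) hlam₁
  have hceil : (b:ℝ) / lam ≤ (l : ℝ) := hl ▸ Int.le_ceil _
  have hbl : (b:ℝ) ≤ lam * l := by
    rw [div_le_iff₀ hlam0] at hceil; linarith [hceil]
  have h2l : (2:ℝ) ≤ lam * l := le_trans (by exact_mod_cast hb) hbl
  have hlr0 : (0:ℝ) < l := by nlinarith
  have hl0 : 0 < l := by exact_mod_cast hlr0
  set p : ℝ := 1 / (lam * l) with hpdef
  have hlaml : 0 < lam * l := by linarith
  have hp0 : 0 < p := by positivity
  have hp1 : p < 1 := by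
    rw [hpdef, div_lt_one hlaml]; linarith
  have hpne : p ≠ 0 := ne_of_gt hp0
  have hq0 : (0:ℝ) < 1 - p := by linarith
  have hqne : (1:ℝ) - p ≠ 0 := ne_of_gt hq0
  -- q^l ≤ exp(-(1/lam))
  have hql : (1 - p) ^ l ≤ Real.exp (-(1/lam)) := by
    have htn : ((l.toNat : ℤ)) = l := Int.toNat_of_nonneg (le_of_lt hl0)
    have h1 : (1 - p) ^ l = (1 - p) ^ l.toNat := by
      rw [← zpow_natCast, htn]
    have h2 : 1 - p ≤ Real.exp (-p) := by
      have := Real.add_one_le_exp (-p); linarith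
    have h3 : (1 - p) ^ l.toNat ≤ Real.exp (-p) ^ l.toNat :=
      pow_le_pow_left₀ (le_of_lt hq0) h2 _
    have h4 : Real.exp (-p) ^ l.toNat = Real.exp ((l.toNat : ℝ) * (-p)) := by
      rw [← Real.exp_nat_mul]
    have h5 : ((l.toNat : ℝ)) * (-p) = -(1/lam) := by
      have hln : ((l.toNat : ℝ)) = (l : ℝ) := by exact_mod_cast htn
      rw [hln, hpdef]
      field_simp
    calc (1 - p) ^ l = (1 - p) ^ l.toNat := h1
      _ ≤ Real.exp (-p) ^ l.toNat := h3
      _ = Real.exp (-(1/lam)) := by rw [h4, h5]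
  have hE : 0 < 1 - Real.exp (-(1/lam)) := by
    have : Real.exp (-(1/lam)) < 1 := by
      rw [Real.exp_lt_one_iff]
      have : 0 < 1/lam := by positivity
      linarith
    linarith
  set Z : ℝ := 1 - (1 - p) ^ l with hZdef
  have hZE : 1 - Real.exp (-(1/lam)) ≤ Z := by rw [hZdef]; linarith
  have hZ0 : 0 < Z := lt_of_lt_of_le hE hZE
  -- rewrite r on the two index ranges
  have hr1 : ∀ i ∈ Finset.Icc 1 x, r i = (1 - p) ^ (l - i) * p / Z := by
    intro i hi
    rw [Finset.mem_Icc] at hi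
    exact hr i (Finset.mem_Icc.mpr ⟨hi.1, by omega⟩)
  have hr2 : ∀ i ∈ Finset.Icc (x+1) l, r i = (1 - p) ^ (l - i) * p / Z := by
    intro i hi
    rw [Finset.mem_Icc] at hi
    exact hr i (Finset.mem_Icc.mpr ⟨by omega, hi.2⟩)
  have hxle : x ≤ l := le_of_lt hxl
  have key := keyIdentity p hpne hqne l x hx1 hxle
  have hstep1 :
      ∑ i ∈ Finset.Icc 1 x, ((b : ℝ) + (i : ℝ) - 1) * r i
          + (x : ℝ) * ∑ i ∈ Finset.Icc (x + 1) l, r i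
        = (∑ i ∈ Finset.Icc 1 x, ((b : ℝ) + (i : ℝ) - 1) * ((1 - p) ^ (l - i) * p)
            + (x : ℝ) * ∑ i ∈ Finset.Icc (x + 1) l, (1 - p) ^ (l - i) * p) / Z := by
    have e1 : ∑ i ∈ Finset.Icc 1 x, ((b : ℝ) + (i : ℝ) - 1) * r i
        = (∑ i ∈ Finset.Icc 1 x, ((b : ℝ) + (i : ℝ) - 1) * ((1 - p) ^ (l - i) * p)) / Z := by
      rw [Finset.sum_div]
      refine Finset.sum_congr rfl fun i hi => ?_
      rw [hr1 i hi]; ring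
    have e2 : ∑ i ∈ Finset.Icc (x+1) l, r i
        = (∑ i ∈ Finset.Icc (x+1) l, (1 - p) ^ (l - i) * p) / Z := by
      rw [Finset.sum_div]
      exact Finset.sum_congr rfl fun i hi => hr2 i hi
    rw [e1, e2]
    ring
  have hsum_le :
      ∑ i ∈ Finset.Icc 1 x, ((b : ℝ) + (i : ℝ) - 1) * ((1 - p) ^ (l - i) * p)
        ≤ ∑ i ∈ Finset.Icc 1 x, (1/p + (i : ℝ) - 1) * ((1 - p) ^ (l - i) * p) := by
    apply Finset.sum_le_sum
    intro i _
    apply mul_le_mul_of_nonneg_right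
    · have : 1/p = lam * l := by rw [hpdef]; field_simp
      rw [this]; linarith
    · positivity
  have hS2 : 0 ≤ ∑ i ∈ Finset.Icc (x+1) l, (1 - p) ^ (l - i) * p :=
    Finset.sum_nonneg (fun i _ => by positivity)
  have hx0 : (0:ℝ) ≤ x := by exact_mod_cast (by omega : (0:ℤ) ≤ x)
  rw [hstep1]
  apply div_le_div₀ hx0 _ hE hZE
  calc ∑ i ∈ Finset.Icc 1 x, ((b : ℝ) + (i : ℝ) - 1) * ((1 - p) ^ (l - i) * p)
          + (x : ℝ) * ∑ i ∈ Finset.Icc (x + 1) l, (1 - p) ^ (l - i) * p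
      ≤ ∑ i ∈ Finset.Icc 1 x, (1/p + (i : ℝ) - 1) * ((1 - p) ^ (l - i) * p)
          + (x : ℝ) * ∑ i ∈ Finset.Icc (x + 1) l, (1 - p) ^ (l - i) * p := by linarith
    _ = (x : ℝ) := key
end

section
/- Let b ≥ 2 be an integer and λ ∈ (1/b, 1] a real number. Set l = ⌈b/λ⌉ and define r_i = (1 − 1/(λl))^{l−i} · (1/(λl)) / (1 − (1 − 1/(λl))^l) for 1 ≤ i ≤ l. Then ∑_{i=1}^{l} (b + i − 1)·r_i ≤ ((1 + 1/⌊λb⌋)/(1 − e^{−λ}))·b. -/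
open Finset Real

private lemma exp_key (lam : ℝ) (h0 : 0 < lam) (h1 : lam ≤ 1) :
    lam^2 * Real.exp (-1) ≤ Real.exp (-lam) + lam - 1 := by
  have hepos : 0 < Real.exp (-1) := Real.exp_pos _
  have hinv : Real.exp (-1) ≤ 368/1000 := by
    rw [Real.exp_neg]
    have h : (1000/368 : ℝ) ≤ Real.exp 1 := by
      calc (1000/368 : ℝ) ≤ 2.7182818283 := by norm_num
        _ ≤ Real.exp 1 := Real.exp_one_gt_d9.le
    calc (Real.exp 1)⁻¹ ≤ (1000/368 : ℝ)⁻¹ := by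
          apply inv_anti₀ (by norm_num) h
      _ = 368/1000 := by norm_num
  rcases le_or_gt lam (3/4) with hc | hc
  · -- small case
    have habs : |lam| ≤ 1 := by rw [abs_of_pos h0]; linarith
    have hA := Real.exp_bound habs (n := 4) (by norm_num)
    have hpoly : Real.exp lam ≤ 1 + lam + lam^2/2 + lam^3/6 + 5*lam^4/96 := by
      have h2 := abs_le.mp hA
      simp [Finset.sum_range_succ, Nat.factorial] at h2
      rw [abs_of_pos h0] at h2
      nlinarith [h2.1, h2.2]
    have hE : Real.exp (-lam) * Real.exp lam = 1 := by
      rw [← Real.exp_add]; simp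
    have hq : (0:ℝ) ≤ 1 - lam + (368/1000) * lam^2 := by nlinarith
    have hppos : (0:ℝ) < Real.exp lam := Real.exp_pos _
    have hpolypos : (0:ℝ) < 1 + lam + lam^2/2 + lam^3/6 + 5*lam^4/96 := by positivity
    have hqle : 1 - lam + (368/1000) * lam^2 ≤ Real.exp (-lam) := by
      rw [← mul_le_mul_iff_of_pos_right hppos, hE]
      calc (1 - lam + (368/1000) * lam^2) * Real.exp lam
          ≤ (1 - lam + (368/1000) * lam^2) * (1 + lam + lam^2/2 + lam^3/6 + 5*lam^4/96) :=
            mul_le_mul_of_nonneg_left hpoly hq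
        _ ≤ 1 := by
            nlinarith [mul_nonneg (pow_nonneg h0.le 2) (sub_nonneg.mpr hc),
              mul_nonneg (pow_nonneg h0.le 3) (sub_nonneg.mpr hc),
              mul_nonneg (pow_nonneg h0.le 4) (sub_nonneg.mpr hc),
              mul_nonneg (pow_nonneg h0.le 5) (sub_nonneg.mpr hc),
              sq_nonneg lam, pow_nonneg h0.le 3, pow_nonneg h0.le 4]
    nlinarith [mul_le_mul_of_nonneg_left hinv (sq_nonneg lam)]
  · -- large case
    have hu0 : (0:ℝ) ≤ 1 - lam := by linarith
    have hsum : 1 + (1-lam) + (1-lam)^2/2 + (1-lam)^3/6 ≤ Real.exp (1-lam) := by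
      have h4 := Real.sum_le_exp_of_nonneg hu0 4
      simp [Finset.sum_range_succ, Nat.factorial] at h4
      nlinarith [h4]
    have hE : Real.exp (-lam) = Real.exp (-1) * Real.exp (1-lam) := by
      rw [← Real.exp_add]; ring_nf
    have helow : (1/2.7182818286 : ℝ) ≤ Real.exp (-1) := by
      rw [Real.exp_neg, one_div]
      exact inv_anti₀ (Real.exp_pos 1) Real.exp_one_lt_d9.le
    have hcub : (0:ℝ) ≤ 1 + (1-lam) + (1-lam)^2/2 + (1-lam)^3/6 - lam^2 := by nlinarith
    have hmul1 : Real.exp (-1) * (1 + (1-lam) + (1-lam)^2/2 + (1-lam)^3/6)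
        ≤ Real.exp (-1) * Real.exp (1-lam) := mul_le_mul_of_nonneg_left hsum hepos.le
    have hmul2 : (1/2.7182818286 : ℝ) * (1 + (1-lam) + (1-lam)^2/2 + (1-lam)^3/6 - lam^2)
        ≤ Real.exp (-1) * (1 + (1-lam) + (1-lam)^2/2 + (1-lam)^3/6 - lam^2) :=
      mul_le_mul_of_nonneg_right helow hcub
    have hpolyfin : (1:ℝ) - lam ≤ (1/2.7182818286 : ℝ) * (1 + (1-lam) + (1-lam)^2/2 + (1-lam)^3/6 - lam^2) := by
      nlinarith [mul_nonneg hu0 hu0, mul_nonneg (mul_nonneg hu0 hu0) hu0, sq_nonneg (1-lam)]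
    rw [hE]
    nlinarith [hmul1, hmul2, hpolyfin]

private lemma key_ineq (B lam : ℝ) (hB : 0 ≤ B) (h0 : 0 < lam) (h1 : lam ≤ 1) :
    (B/lam + 1) * (1 - Real.exp (-lam)) ≤ (B + 1/lam) * (1 - Real.exp (-(1/lam))) := by
  have hinva : 1 ≤ 1/lam := by rw [le_div_iff₀ h0]; linarith
  have hx : Real.exp (-(1/lam)) ≤ lam * Real.exp (-1) := by
    have h2 : 1/lam ≤ Real.exp (1/lam - 1) := by
      have := Real.add_one_le_exp (1/lam - 1); linarith
    have hE2 : Real.exp (-(1/lam)) * Real.exp (1/lam - 1) = Real.exp (-1) := by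
      rw [← Real.exp_add]; ring_nf
    have h3 : 1 ≤ lam * Real.exp (1/lam - 1) := by
      have := mul_le_mul_of_nonneg_left h2 h0.le
      rwa [mul_one_div, div_self h0.ne'] at this
    nlinarith [Real.exp_pos (-(1/lam)), Real.exp_pos (1/lam - 1),
      mul_le_mul_of_nonneg_left h3 (Real.exp_pos (-(1/lam))).le]
  have hle1 : Real.exp (-(1/lam)) ≤ 1 :=
    Real.exp_le_one_iff.mpr (neg_nonpos.mpr (by positivity))
  have hmain : 1 - Real.exp (-lam) ≤ lam * (1 - Real.exp (-(1/lam))) := by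
    nlinarith [exp_key lam h0 h1, mul_le_mul_of_nonneg_left hx h0.le]
  have part1 : (1/lam) * (1 - Real.exp (-lam)) ≤ 1 - Real.exp (-(1/lam)) := by
    rw [div_mul_eq_mul_div, div_le_iff₀ h0]
    nlinarith [hmain]
  have part2 : 1 - Real.exp (-lam) ≤ (1/lam) * (1 - Real.exp (-(1/lam))) := by
    have hmono : Real.exp (-(1/lam)) ≤ Real.exp (-lam) := by
      apply Real.exp_le_exp.mpr
      have : lam ≤ 1/lam := by
        rw [le_div_iff₀ h0]; nlinarith
      linarith
    nlinarith [mul_le_mul_of_nonneg_right hinva (by linarith : (0:ℝ) ≤ 1 - Real.exp (-(1/lam)))]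
  have h5 := mul_le_mul_of_nonneg_left part1 hB
  have hexpand : (B/lam + 1) * (1 - Real.exp (-lam))
      = B * ((1/lam) * (1 - Real.exp (-lam))) + (1 - Real.exp (-lam)) := by ring
  have hexpand2 : (B + 1/lam) * (1 - Real.exp (-(1/lam)))
      = B * (1 - Real.exp (-(1/lam))) + (1/lam) * (1 - Real.exp (-(1/lam))) := by ring
  rw [hexpand, hexpand2]
  exact add_le_add h5 part2

/-- Case `y < b`, `x ≥ l` of Theorem 2 (robustness side): the expected cost of
the CostRobust randomized algorithm is at most `((1 + 1/⌊λb⌋)/(1 − e^{−λ}))·b`. -/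
theorem costRobust_robustness_case4 (b : ℕ) (hb : 2 ≤ b) (lam : ℝ)
    (hlam₁ : 1 / (b : ℝ) < lam) (hlam₂ : lam ≤ 1)
    (l : ℤ) (hl : l = ⌈(b : ℝ) / lam⌉)
    (r : ℤ → ℝ)
    (hr : ∀ i ∈ Finset.Icc 1 l,
      r i = (1 - 1 / (lam * (l : ℝ))) ^ (l - i) * (1 / (lam * (l : ℝ)))
              / (1 - (1 - 1 / (lam * (l : ℝ))) ^ l)) :
    ∑ i ∈ Finset.Icc 1 l, ((b : ℝ) + (i : ℝ) - 1) * r i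
      ≤ ((1 + 1 / (⌊lam * (b : ℝ)⌋ : ℝ)) / (1 - Real.exp (-lam))) * (b : ℝ) := by
  have hb2 : (2:ℝ) ≤ (b:ℝ) := by exact_mod_cast hb
  have hbpos : (0:ℝ) < b := by linarith
  have hlam0 : (0:ℝ) < lam := lt_trans (by positivity) hlam₁
  have hlb : (b:ℝ)/lam ≤ (l:ℝ) := by rw [hl]; exact Int.le_ceil _
  have hbl : (b:ℝ) ≤ lam * (l:ℝ) := by
    have h := mul_le_mul_of_nonneg_left hlb hlam0.le
    rwa [mul_div_cancel₀ _ hlam0.ne'] at h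
  have hP2 : (2:ℝ) ≤ lam * (l:ℝ) := le_trans hb2 hbl
  have hPpos : (0:ℝ) < lam * (l:ℝ) := by linarith
  have hPne : lam * (l:ℝ) ≠ 0 := hPpos.ne'
  have hlreal : (2:ℝ) ≤ (l:ℝ) := by
    have h1 : (b:ℝ) ≤ (b:ℝ)/lam := by
      rw [le_div_iff₀ hlam0]; nlinarith
    linarith
  have hl1 : (1:ℤ) ≤ l := by exact_mod_cast (by linarith : (1:ℝ) ≤ (l:ℝ))
  set n := l.toNat with hn
  have hnl : (n:ℤ) = l := Int.toNat_of_nonneg (by linarith)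
  have hn1 : 1 ≤ n := by omega
  have hnlR : (n:ℝ) = (l:ℝ) := by exact_mod_cast congrArg (Int.cast : ℤ → ℝ) hnl
  set Q : ℝ := 1 - 1/(lam * (l:ℝ)) with hQdef
  have hp_pos : (0:ℝ) < 1/(lam*(l:ℝ)) := by positivity
  have hp_half : 1/(lam*(l:ℝ)) ≤ 1/2 := by
    apply one_div_le_one_div_of_le (by norm_num) hP2
  have hQ0 : (0:ℝ) ≤ Q := by rw [hQdef]; linarith
  have hQ1 : Q < 1 := by rw [hQdef]; linarith
  have hQle : Q ≤ Real.exp (-(1/(lam*(l:ℝ)))) := by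
    have := Real.add_one_le_exp (-(1/(lam*(l:ℝ)))); rw [hQdef]; linarith
  have hQn : Q^n ≤ Real.exp (-(1/lam)) := by
    calc Q^n ≤ (Real.exp (-(1/(lam*(l:ℝ)))))^n := pow_le_pow_left₀ hQ0 hQle n
      _ = Real.exp ((n:ℝ) * (-(1/(lam*(l:ℝ))))) := by rw [← Real.exp_nat_mul]
      _ = Real.exp (-(1/lam)) := by
          congr 1
          rw [hnlR]
          field_simp
  have hE1lt : Real.exp (-(1/lam)) < 1 :=
    Real.exp_lt_one_iff.mpr (neg_neg_of_pos (by positivity))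
  have hD1pos : (0:ℝ) < 1 - Real.exp (-(1/lam)) := by linarith
  have hDpos : (0:ℝ) < 1 - Q^n := by linarith
  have hElam : Real.exp (-lam) < 1 := Real.exp_lt_one_iff.mpr (by linarith)
  have hDlam : (0:ℝ) < 1 - Real.exp (-lam) := by linarith
  have hIcc : Finset.Icc (1:ℤ) l
      = (Finset.range n).map ⟨fun j : ℕ => (j:ℤ)+1, @id (Function.Injective fun j : ℕ => (j:ℤ)+1) (fun a b h => by simpa using h)⟩ := by
    ext x
    simp only [Finset.mem_Icc, Finset.mem_map, Finset.mem_range, Function.Embedding.coeFn_mk]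
    constructor
    · intro hx; exact ⟨(x-1).toNat, by omega, by omega⟩
    · rintro ⟨j, hj, rfl⟩; omega
  have hcastln : (((n:ℕ):ℤ):ℝ) = (l:ℝ) := by rw [hnl]
  have hQzl : (1 - 1/(lam * (l:ℝ))) ^ l = Q^n := by
    rw [← hnl, zpow_natCast, hcastln]
  have h1Q : 1/(lam*(l:ℝ)) = 1 - Q := by rw [hQdef]; ring
  -- main bound on the sum
  have hsum_le : ∑ i ∈ Finset.Icc 1 l, ((b : ℝ) + (i : ℝ) - 1) * r i
      ≤ (n:ℝ) / (1 - Q^n) := by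
    rw [hIcc, Finset.sum_map]
    simp only [Function.Embedding.coeFn_mk]
    have hstep : ∀ j ∈ Finset.range n,
        ((b : ℝ) + (((j:ℤ)+1 : ℤ) : ℝ) - 1) * r ((j:ℤ)+1)
          ≤ (lam*(l:ℝ) + (j:ℝ)) * (Q^(n-1-j) * (1/(lam*(l:ℝ)))) / (1 - Q^n) := by
      intro j hj
      rw [Finset.mem_range] at hj
      have hmem : ((j:ℤ)+1) ∈ Finset.Icc (1:ℤ) l := by
        rw [Finset.mem_Icc]; omega
      rw [hr _ hmem]
      have hze : (1 - 1/(lam * (l:ℝ))) ^ (l - ((j:ℤ)+1)) = Q^(n-1-j) := by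
        rw [show l - ((j:ℤ)+1) = ((n-1-j : ℕ) : ℤ) by omega, zpow_natCast]
      rw [hze, hQzl]
      push_cast
      rw [← mul_div_assoc]
      apply (div_le_div_iff_of_pos_right hDpos).mpr
      have hfac : (0:ℝ) ≤ Q^(n-1-j) * (1/(lam*(l:ℝ))) := by positivity
      exact mul_le_mul_of_nonneg_right (by linarith) hfac
    have hterm : ∀ j ∈ Finset.range n,
        (lam*(l:ℝ) + (j:ℝ)) * (Q^(n-1-j) * (1/(lam*(l:ℝ))))
          = ((j:ℝ)+1) * Q^(n-(j+1)) - (j:ℝ) * Q^(n-j) := by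
      intro j hj
      rw [Finset.mem_range] at hj
      have hA : n - j = (n-1-j) + 1 := by omega
      have hB : n - (j+1) = n-1-j := by omega
      rw [hA, hB, pow_succ]
      calc (lam*(l:ℝ) + (j:ℝ)) * (Q^(n-1-j) * (1/(lam*(l:ℝ))))
          = Q^(n-1-j) * (lam*(l:ℝ)*(1/(lam*(l:ℝ)))) + Q^(n-1-j) * ((j:ℝ)*(1/(lam*(l:ℝ)))) := by
            ring
        _ = Q^(n-1-j) * 1 + Q^(n-1-j) * ((j:ℝ)*(1 - Q)) := by
            rw [mul_one_div_cancel hPne, h1Q]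
        _ = ((j:ℝ)+1) * Q^(n-1-j) - (j:ℝ) * (Q^(n-1-j) * Q) := by ring
    have htel : ∑ j ∈ Finset.range n,
        (((j:ℝ)+1) * Q^(n-(j+1)) - (j:ℝ) * Q^(n-j)) = (n:ℝ) := by
      have h := Finset.sum_range_sub (fun k : ℕ => (k:ℝ) * Q^(n-k)) n
      simp only [Nat.sub_self, pow_zero, mul_one, Nat.cast_zero, zero_mul,
        Nat.sub_zero, sub_zero] at h
      push_cast at h
      exact h
    calc ∑ j ∈ Finset.range n, ((b : ℝ) + (((j:ℤ)+1 : ℤ) : ℝ) - 1) * r ((j:ℤ)+1)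
        ≤ ∑ j ∈ Finset.range n,
            (lam*(l:ℝ) + (j:ℝ)) * (Q^(n-1-j) * (1/(lam*(l:ℝ)))) / (1 - Q^n) :=
          Finset.sum_le_sum hstep
      _ = (∑ j ∈ Finset.range n, (lam*(l:ℝ) + (j:ℝ)) * (Q^(n-1-j) * (1/(lam*(l:ℝ))))) / (1 - Q^n) := by
          rw [Finset.sum_div]
      _ = (n:ℝ) / (1 - Q^n) := by
          rw [Finset.sum_congr rfl hterm, htel]
  -- final chain
  have hm1 : (1:ℤ) ≤ ⌊lam * (b:ℝ)⌋ := by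
    apply Int.le_floor.mpr
    rw [div_lt_iff₀ hbpos] at hlam₁
    push_cast
    linarith
  have hmR : (1:ℝ) ≤ (⌊lam * (b:ℝ)⌋ : ℝ) := by exact_mod_cast hm1
  have hmpos : (0:ℝ) < (⌊lam * (b:ℝ)⌋ : ℝ) := by linarith
  have hmle : ((⌊lam * (b:ℝ)⌋ : ℝ)) ≤ lam * (b:ℝ) := Int.floor_le _
  have hceil : (l:ℝ) ≤ (b:ℝ)/lam + 1 := by
    rw [hl]; exact (Int.ceil_lt_add_one _).le
  have h1m : 1/lam ≤ (b:ℝ)/(⌊lam * (b:ℝ)⌋ : ℝ) := by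
    rw [div_le_div_iff₀ hlam0 hmpos]
    linarith
  calc ∑ i ∈ Finset.Icc 1 l, ((b : ℝ) + (i : ℝ) - 1) * r i
      ≤ (n:ℝ) / (1 - Q^n) := hsum_le
    _ ≤ (n:ℝ) / (1 - Real.exp (-(1/lam))) :=
        div_le_div_of_nonneg_left (by positivity) hD1pos (by linarith)
    _ ≤ ((b:ℝ)/lam + 1) / (1 - Real.exp (-(1/lam))) := by
        apply (div_le_div_iff_of_pos_right hD1pos).mpr
        rw [hnlR]; linarith
    _ ≤ ((b:ℝ) + 1/lam) / (1 - Real.exp (-lam)) := by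
        rw [div_le_div_iff₀ hD1pos hDlam]
        exact key_ineq (b:ℝ) lam (by positivity) hlam0 hlam₂
    _ ≤ ((1 + 1 / (⌊lam * (b:ℝ)⌋ : ℝ)) / (1 - Real.exp (-lam))) * (b:ℝ) := by
        rw [div_mul_eq_mul_div, div_le_div_iff₀ hDlam hDlam]
        have hexp : (1 + 1/(⌊lam * (b:ℝ)⌋ : ℝ)) * (b:ℝ) = (b:ℝ) + (b:ℝ)/(⌊lam * (b:ℝ)⌋ : ℝ) := by
          ring
        have hfin : (b:ℝ) + 1/lam ≤ (1 + 1/(⌊lam * (b:ℝ)⌋ : ℝ)) * (b:ℝ) := by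
          rw [hexp]; linarith
        exact mul_le_mul_of_nonneg_right hfin hDlam.le
end

section
/- Let b ≥ 2 be an integer and λ ∈ (1/b, 1] a real number. Set l = ⌈b/λ⌉ and define r_i = (1 − 1/(λl))^{l−i} · (1/(λl)) / (1 − (1 − 1/(λl))^l) for 1 ≤ i ≤ l. Then ∑_{i=1}^{l} (b + i − 1)·r_i ≤ l/(1 − e^{−1/λ}). -/
open Finset Real

private lemma tele_sum (p : ℝ) (L : ℕ) :
    ∑ j ∈ Finset.range L, (1 + (j : ℝ) * p) * (1 - p) ^ (L - 1 - j) = L := by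
  induction L with
  | zero => simp
  | succ n ih =>
    rw [Finset.sum_range_succ]
    have h1 : ∀ j ∈ Finset.range n,
        (1 + (j : ℝ) * p) * (1 - p) ^ (n + 1 - 1 - j)
          = (1 - p) * ((1 + (j : ℝ) * p) * (1 - p) ^ (n - 1 - j)) := by
      intro j hj
      have hj' := Finset.mem_range.mp hj
      have h2 : n + 1 - 1 - j = (n - 1 - j) + 1 := by omega
      rw [h2, pow_succ]; ring
    rw [Finset.sum_congr rfl h1, ← Finset.mul_sum, ih]
    have h3 : n + 1 - 1 - n = 0 := by omega
    rw [h3]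
    push_cast
    ring

private lemma reindex_sum (f : ℤ → ℝ) (L : ℕ) :
    ∑ i ∈ Finset.Icc (1 : ℤ) (L : ℤ), f i = ∑ j ∈ Finset.range L, f ((j : ℤ) + 1) := by
  induction L with
  | zero => simp
  | succ n ih =>
    have hins : Finset.Icc (1 : ℤ) ((n : ℤ) + 1) = insert ((n : ℤ) + 1) (Finset.Icc 1 (n : ℤ)) := by
      ext x; simp only [Finset.mem_Icc, Finset.mem_insert]; omega
    have hnot : ((n : ℤ) + 1) ∉ Finset.Icc (1 : ℤ) (n : ℤ) := by
      simp only [Finset.mem_Icc]; omega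
    push_cast
    rw [hins, Finset.sum_insert hnot, Finset.sum_range_succ, ih]
    push_cast
    ring

/-- Case `y < b`, `x ≥ l` of Theorem 2 (consistency side): the expected cost of
the CostRobust randomized algorithm is at most `l/(1 − e^{−1/λ})`. -/
theorem costRobust_consistency_case4 (b : ℕ) (hb : 2 ≤ b) (lam : ℝ)
    (hlam₁ : 1 / (b : ℝ) < lam) (hlam₂ : lam ≤ 1)
    (l : ℤ) (hl : l = ⌈(b : ℝ) / lam⌉)
    (r : ℤ → ℝ)
    (hr : ∀ i ∈ Finset.Icc 1 l,
      r i = (1 - 1 / (lam * (l : ℝ))) ^ (l - i) * (1 / (lam * (l : ℝ)))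
              / (1 - (1 - 1 / (lam * (l : ℝ))) ^ l)) :
    ∑ i ∈ Finset.Icc 1 l, ((b : ℝ) + (i : ℝ) - 1) * r i
      ≤ (l : ℝ) / (1 - Real.exp (-(1 / lam))) := by
  have hbR : (2 : ℝ) ≤ (b : ℝ) := by exact_mod_cast hb
  have hlam0 : 0 < lam := lt_trans (by positivity) hlam₁
  have hceil : (b : ℝ) / lam ≤ (l : ℝ) := by rw [hl]; exact Int.le_ceil _
  have hbl : (b : ℝ) ≤ lam * (l : ℝ) := by
    rw [div_le_iff₀ hlam0] at hceil; linarith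
  have ha2 : (2 : ℝ) ≤ lam * (l : ℝ) := le_trans hbR hbl
  have hlpos : (0 : ℤ) < l := by
    by_contra h
    push_neg at h
    have : (l : ℝ) ≤ 0 := by exact_mod_cast h
    nlinarith
  set L := l.toNat with hLdef
  have hLl : (L : ℤ) = l := Int.toNat_of_nonneg hlpos.le
  have hLR : ((L : ℕ) : ℝ) = (l : ℝ) := by exact_mod_cast hLl
  have hLpos : 0 < L := by omega
  have hapos : 0 < lam * (l : ℝ) := by linarith
  set p : ℝ := 1 / (lam * (l : ℝ)) with hpdef
  have hppos : 0 < p := by positivity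
  have hple : p ≤ 1 / 2 := by
    rw [hpdef, div_le_div_iff₀ hapos (by norm_num)]; linarith
  have hq0 : (0 : ℝ) ≤ 1 - p := by linarith
  have hq1 : 1 - p < 1 := by linarith
  have hap : (lam * (l : ℝ)) * p = 1 := by
    rw [hpdef]; field_simp
  -- the zpow in the denominator is a nat pow
  have hzl : (1 - p) ^ (l : ℤ) = (1 - p) ^ L := by
    rw [← hLl, zpow_natCast]
  set D : ℝ := 1 - (1 - p) ^ L with hDdef
  have hD : 0 < D := by
    have : (1 - p) ^ L < 1 := pow_lt_one₀ hq0 hq1 (by omega)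
    simp only [hDdef]; linarith
  -- exponential bound
  have hqe : 1 - p ≤ Real.exp (-p) := by
    have := Real.add_one_le_exp (-p); linarith
  have hpow : (1 - p) ^ L ≤ Real.exp (-(1 / lam)) := by
    calc (1 - p) ^ L ≤ (Real.exp (-p)) ^ L := pow_le_pow_left₀ hq0 hqe L
      _ = Real.exp ((L : ℝ) * (-p)) := by rw [Real.exp_nat_mul]
      _ = Real.exp (-(1 / lam)) := by
          congr 1
          rw [hpdef, hLR]
          have hl0 : (l : ℝ) ≠ 0 := by positivity
          field_simp
  have hexp1 : Real.exp (-(1 / lam)) < 1 := by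
    apply Real.exp_lt_one_iff.mpr
    have : 0 < 1 / lam := by positivity
    linarith
  have hE : 0 < 1 - Real.exp (-(1 / lam)) := by linarith
  have hED : 1 - Real.exp (-(1 / lam)) ≤ D := by simp only [hDdef]; linarith
  -- main computation
  have key : ∑ i ∈ Finset.Icc 1 l, ((b : ℝ) + (i : ℝ) - 1) * r i ≤ (L : ℝ) / D := by
    have hre := reindex_sum (fun i => ((b : ℝ) + (i : ℝ) - 1) * r i) L
    rw [hLl] at hre
    rw [hre]
    have hterm : ∀ j ∈ Finset.range L,
        ((b : ℝ) + (((j : ℤ) + 1 : ℤ) : ℝ) - 1) * r ((j : ℤ) + 1)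
          ≤ (1 + (j : ℝ) * p) * (1 - p) ^ (L - 1 - j) / D := by
      intro j hj
      have hj' := Finset.mem_range.mp hj
      have hmem : (j : ℤ) + 1 ∈ Finset.Icc 1 l := by
        simp only [Finset.mem_Icc]; omega
      have hexp : l - ((j : ℤ) + 1) = ((L - 1 - j : ℕ) : ℤ) := by omega
      rw [hr _ hmem, hexp, zpow_natCast, hzl, ← hDdef]
      have h1 : ((b : ℝ) + (j : ℝ)) * p ≤ 1 + (j : ℝ) * p := by
        have h2 : (b : ℝ) * p ≤ (lam * (l : ℝ)) * p :=
          mul_le_mul_of_nonneg_right hbl hppos.le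
        rw [hap] at h2
        nlinarith
      have heq : ((b : ℝ) + (((j : ℤ) + 1 : ℤ) : ℝ) - 1) * ((1 - p) ^ (L - 1 - j) * p / D)
          = (((b : ℝ) + (j : ℝ)) * p) * (1 - p) ^ (L - 1 - j) / D := by
        push_cast; ring
      rw [heq]
      gcongr
    calc ∑ j ∈ Finset.range L, ((b : ℝ) + (((j : ℤ) + 1 : ℤ) : ℝ) - 1) * r ((j : ℤ) + 1)
        ≤ ∑ j ∈ Finset.range L, (1 + (j : ℝ) * p) * (1 - p) ^ (L - 1 - j) / D :=
          Finset.sum_le_sum hterm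
      _ = (L : ℝ) / D := by rw [← Finset.sum_div, tele_sum]
  calc ∑ i ∈ Finset.Icc 1 l, ((b : ℝ) + (i : ℝ) - 1) * r i ≤ (L : ℝ) / D := key
    _ ≤ (L : ℝ) / (1 - Real.exp (-(1 / lam))) := by gcongr
    _ = (l : ℝ) / (1 - Real.exp (-(1 / lam))) := by rw [hLR]
end

section
/- For every real number λ with 0 < λ ≤ 1, one has 1/(1 − e^{−1/λ}) ≤ λ/(1 − e^{−λ}); equivalently, λ·(1 − e^{−1/λ}) ≥ 1 − e^{−λ}. -/
open Real

-- cubic-ish lower bound for exp(-x) on [0,1]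
lemma exp_neg_ge_cubic {x : ℝ} (h0 : 0 ≤ x) (h1 : x ≤ 1) :
    1 - x + x^2/2 - x^3/6 - 5*x^4/96 ≤ Real.exp (-x) := by
  have hx : |(-x)| ≤ 1 := by rw [abs_neg, abs_of_nonneg h0]; exact h1
  have h := Real.exp_bound hx (n := 4) (by norm_num)
  have h' := (abs_sub_le_iff.1 h).2
  have hs : ∑ m ∈ Finset.range 4, (-x) ^ m / (m.factorial : ℝ)
      = 1 - x + x^2/2 - x^3/6 := by
    simp [Finset.sum_range_succ, Nat.factorial]
    ring
  rw [hs] at h'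
  have hab : |(-x)| = x := by rw [abs_neg, abs_of_nonneg h0]
  rw [hab] at h'
  norm_num [Nat.factorial] at h' ⊢
  nlinarith [h']

lemma exp_ge_quad {x : ℝ} (h0 : 0 ≤ x) (h1 : x ≤ 1) :
    1 + x + x^2/2 - 2*x^3/9 ≤ Real.exp x := by
  have hx : |x| ≤ 1 := by rw [abs_of_nonneg h0]; exact h1
  have h := Real.exp_bound hx (n := 3) (by norm_num)
  have h' := (abs_sub_le_iff.1 h).2
  have hs : ∑ m ∈ Finset.range 3, x ^ m / (m.factorial : ℝ)
      = 1 + x + x^2/2 := by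
    norm_num [Finset.sum_range_succ, Nat.factorial]
  rw [hs, abs_of_nonneg h0] at h'
  norm_num [Nat.factorial] at h' ⊢
  nlinarith [h']

-- Lemma B : exp(-lam) - 1 + lam ≥ lam^2 * exp(-1) on [0,1]
lemma lemB {lam : ℝ} (h0 : 0 ≤ lam) (h1 : lam ≤ 1) :
    lam^2 * Real.exp (-1) ≤ Real.exp (-lam) - 1 + lam := by
  have hinv : Real.exp (-1) = 1 / Real.exp 1 := by
    rw [Real.exp_neg]; ring
  have he1 : (2.7182818283 : ℝ) < Real.exp 1 := Real.exp_one_gt_d9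
  have he2 : Real.exp 1 < 2.7182818286 := Real.exp_one_lt_d9
  have hepos : (0:ℝ) < Real.exp 1 := Real.exp_pos 1
  rcases le_total lam 0.6 with hc | hc
  · -- small case
    have hcu := exp_neg_ge_cubic h0 h1
    have hE : Real.exp (-1) ≤ 0.3679 := by
      rw [hinv]
      rw [div_le_iff₀ hepos]
      nlinarith
    have h2 : lam^2 ≤ 0.36 := by nlinarith
    have h3 : lam^3 ≤ 0.6 * lam^2 := by nlinarith
    have h4 : lam^4 ≤ 0.36 * lam^2 := by nlinarith [sq_nonneg lam, sq_nonneg (lam^2)]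
    have h5 : lam^2 * Real.exp (-1) ≤ 0.3679 * lam^2 := by
      nlinarith [sq_nonneg lam, hE, Real.exp_pos (-1)]
    linarith [sq_nonneg lam]
  · -- large case: lam in [0.6,1]
    set v := 1 - lam with hv
    have hv0 : 0 ≤ v := by simp [hv]; linarith
    have hv1 : v ≤ 0.4 := by simp [hv]; linarith
    have hq := exp_ge_quad hv0 (by linarith)
    have hE : Real.exp (-lam) = Real.exp (-1) * Real.exp v := by
      rw [← Real.exp_add, hv]; ring_nf
    have hkey : Real.exp (-lam) ≥ Real.exp (-1) * (1 + v + v^2/2 - 2*v^3/9) := by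
      rw [hE]
      have := Real.exp_pos (-1)
      nlinarith
    -- need exp(-1)*(1 + v + v²/2 - 2v³/9) - 1 + lam ≥ lam² exp(-1)
    -- i.e. exp(-1)*(3v - v²/2 - 2v³/9) ≥ v, i.e. 3 - v/2 - 2v²/9 ≥ e
    have hEinv : Real.exp (-1) * Real.exp 1 = 1 := by
      rw [← Real.exp_add]; simp
    have hne : Real.exp (-1) * (3*v - v^2/2 - 2*v^3/9) ≥ v := by
      have h3 : 3*v - v^2/2 - 2*v^3/9 ≥ v * Real.exp 1 := by
        nlinarith [sq_nonneg v, mul_nonneg hv0 hv0]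
      calc Real.exp (-1) * (3*v - v^2/2 - 2*v^3/9)
          ≥ Real.exp (-1) * (v * Real.exp 1) := by
            apply mul_le_mul_of_nonneg_left h3 (le_of_lt (Real.exp_pos _))
        _ = v := by rw [show Real.exp (-1) * (v * Real.exp 1) = v * (Real.exp (-1) * Real.exp 1) by ring, hEinv, mul_one]
      
    have hl : lam = 1 - v := by simp [hv]
    nlinarith [Real.exp_pos (-1), hkey, hne]

/-- For `0 < λ ≤ 1`: `1/(1 − e^{−1/λ}) ≤ λ/(1 − e^{−λ})`; equivalently,
`λ·(1 − e^{−1/λ}) ≥ 1 − e^{−λ}`. -/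
theorem one_div_one_sub_exp_le (lam : ℝ) (h₀ : 0 < lam) (h₁ : lam ≤ 1) :
    1 / (1 - Real.exp (-(1 / lam))) ≤ lam / (1 - Real.exp (-lam)) ∧
    lam * (1 - Real.exp (-(1 / lam))) ≥ 1 - Real.exp (-lam) := by
  -- Lemma A : exp(-(1/lam)) ≤ lam * exp(-1)
  have hA : Real.exp (-(1/lam)) ≤ lam * Real.exp (-1) := by
    have h1 : 1/lam ≤ Real.exp (1/lam - 1) := by
      have := Real.add_one_le_exp (1/lam - 1)
      linarith
    have h2 : Real.exp (-(1/lam)) * Real.exp (1/lam - 1) = Real.exp (-1) := by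
      rw [← Real.exp_add]; ring_nf
    have hp : 0 < Real.exp (-(1/lam)) := Real.exp_pos _
    have h3 : Real.exp (-(1/lam)) * (1/lam) ≤ Real.exp (-1) := by
      calc Real.exp (-(1/lam)) * (1/lam) ≤ Real.exp (-(1/lam)) * Real.exp (1/lam - 1) :=
            mul_le_mul_of_nonneg_left h1 hp.le
        _ = Real.exp (-1) := h2
    rw [div_le_iff₀ h₀] at *
    calc Real.exp (-(1/lam)) = (Real.exp (-(1/lam)) * (1/lam)) * lam := by
          field_simp
      _ ≤ Real.exp (-1) * lam := by
          apply mul_le_mul_of_nonneg_right h3 h₀.le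
      _ = lam * Real.exp (-1) := by ring
  have hB := lemB h₀.le h₁
  have main : 1 - Real.exp (-lam) ≤ lam * (1 - Real.exp (-(1/lam))) := by
    have : lam * (1 - lam * Real.exp (-1)) ≤ lam * (1 - Real.exp (-(1/lam))) := by
      apply mul_le_mul_of_nonneg_left (by linarith) h₀.le
    nlinarith
  constructor
  · have d1 : 0 < 1 - Real.exp (-(1/lam)) := by
      have : Real.exp (-(1/lam)) < 1 := by
        rw [Real.exp_lt_one_iff]
        simp; positivity
      linarith
    have d2 : 0 < 1 - Real.exp (-lam) := by
      have : Real.exp (-lam) < 1 := by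
        rw [Real.exp_lt_one_iff]; linarith
      linarith
    rw [div_le_div_iff₀ d1 d2]
    linarith [main]
  · exact main
end

section
/- Let b ≥ 2 and x ≥ 1 be integers, let λ be a real number with 1/(b−1) < λ ≤ 1, let b_s be a real number with 0 < b_s ≤ b + 1, and let d be an integer with 1 ≤ d ≤ ⌈b_s/λ⌉. Define ALG = b + d − 1 if d ≤ x and ALG = x otherwise, and OPT = min(b, x). Then 0 ≤ (ALG − OPT)/OPT ≤ b. -/
/-- Theorem 3: the normalized loss of a ski expert in one round of the sequential
ski-rental problem is bounded: `0 ≤ (ALG − OPT)/OPT ≤ b`. -/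
theorem ski_expert_loss_bounded (b x : ℤ) (hb : 2 ≤ b) (hx : 1 ≤ x)
    (lam : ℝ) (hlam₁ : 1 / ((b : ℝ) - 1) < lam) (hlam₂ : lam ≤ 1)
    (b_s : ℝ) (hbs₀ : 0 < b_s) (hbs₁ : b_s ≤ (b : ℝ) + 1)
    (d : ℤ) (hd₁ : 1 ≤ d) (hd₂ : d ≤ ⌈b_s / lam⌉)
    (ALG OPT : ℝ)
    (hALG : ALG = if d ≤ x then (b : ℝ) + (d : ℝ) - 1 else (x : ℝ))
    (hOPT : OPT = min (b : ℝ) (x : ℝ)) :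
    0 ≤ (ALG - OPT) / OPT ∧ (ALG - OPT) / OPT ≤ (b : ℝ) := by
  have hbR : (2:ℝ) ≤ (b:ℝ) := by exact_mod_cast hb
  have hxR : (1:ℝ) ≤ (x:ℝ) := by exact_mod_cast hx
  have hbm1 : (0:ℝ) < (b:ℝ) - 1 := by linarith
  have hlam0 : 0 < lam := lt_trans (by positivity) hlam₁
  have h1 : 1 < lam * ((b:ℝ) - 1) := (div_lt_iff₀ hbm1).mp hlam₁
  have hinv : 1 / lam < (b:ℝ) - 1 := (div_lt_iff₀ hlam0).mpr (by nlinarith)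
  have hkey : b_s / lam ≤ (b:ℝ)^2 - 1 := by
    have : b_s / lam = b_s * (1 / lam) := by ring
    rw [this]
    nlinarith [mul_lt_mul_of_pos_left hinv hbs₀]
  have hceil : d ≤ b ^ 2 - 1 := by
    refine le_trans hd₂ (Int.ceil_le.mpr ?_)
    push_cast
    linarith
  have hdR : (d:ℝ) ≤ (b:ℝ)^2 - 1 := by exact_mod_cast (by push_cast at hceil ⊢; exact_mod_cast hceil : (d:ℝ) ≤ ((b:ℝ)^2 - 1))
  have hd1R : (1:ℝ) ≤ (d:ℝ) := by exact_mod_cast hd₁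
  have hOPTpos : 0 < OPT := by
    rw [hOPT]; exact lt_min (by linarith) (by linarith)
  have hOPTb : OPT ≤ (b:ℝ) := by rw [hOPT]; exact min_le_left _ _
  have hOPTx : OPT ≤ (x:ℝ) := by rw [hOPT]; exact min_le_right _ _
  have hALGge : OPT ≤ ALG := by
    rw [hALG]
    split
    · linarith
    · linarith
  constructor
  · exact div_nonneg (by linarith) hOPTpos.le
  · rw [div_le_iff₀ hOPTpos]
    -- suffices ALG ≤ (b+1) * OPT
    rw [hALG]
    split
    · rename_i h
      rcases le_total (b:ℝ) (x:ℝ) with hbx | hbx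
      · have : OPT = (b:ℝ) := by rw [hOPT, min_eq_left hbx]
        rw [this]; nlinarith
      · have : OPT = (x:ℝ) := by rw [hOPT, min_eq_right hbx]
        have hdx : (d:ℝ) ≤ (x:ℝ) := by exact_mod_cast h
        rw [this]; nlinarith
    · rename_i h
      push_neg at h
      have hxd : (x:ℝ) < (d:ℝ) := by exact_mod_cast h
      rcases le_total (b:ℝ) (x:ℝ) with hbx | hbx
      · have : OPT = (b:ℝ) := by rw [hOPT, min_eq_left hbx]
        rw [this]; nlinarith
      · have : OPT = (x:ℝ) := by rw [hOPT, min_eq_right hbx]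
        rw [this]; nlinarith
end

section
/- Let m ≥ 2 be an integer, let Δ > 0, δ > 0, ε > 0, T ≥ 1 and c > 1 be real numbers, set γ_min = δε²/(Tc) and A = (2m/(c−1))·(1 + TcΔ/(δε²)). Then for every real t with t − 1 ≥ max((8/Δ²)·log A, (1/(2Δ²·log m))·(log A)²), one has e^{−Δ·√(2(t−1)·log m)} + e^{−(t−1)·Δ²/8} ≤ (δε²/T − γ_min)/(m·(γ_min + Δ)). -/
/-- Analytic core of Theorem 6: with `γ_min = δε²/(Tc)` and
`A = (2m/(c−1))·(1 + TcΔ/(δε²))`, once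
`t − 1 ≥ max((8/Δ²)·log A, (1/(2Δ²·log m))·(log A)²)`, the exponential sum
`e^{−Δ√(2(t−1) log m)} + e^{−(t−1)Δ²/8}` is at most
`(δε²/T − γ_min)/(m(γ_min + Δ))`. -/
theorem exp_sum_small_after_tstar (m : ℕ) (hm : 2 ≤ m)
    (Δ δ ε T c : ℝ) (hΔ : 0 < Δ) (hδ : 0 < δ) (hε : 0 < ε) (hT : 1 ≤ T) (hc : 1 < c)
    (γmin : ℝ) (hγ : γmin = δ * ε ^ 2 / (T * c))
    (A : ℝ) (hA : A = (2 * (m : ℝ) / (c - 1)) * (1 + T * c * Δ / (δ * ε ^ 2))) :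
    ∀ t : ℝ,
      t - 1 ≥ max ((8 / Δ ^ 2) * Real.log A)
                  ((1 / (2 * Δ ^ 2 * Real.log m)) * (Real.log A) ^ 2) →
      Real.exp (-Δ * Real.sqrt (2 * (t - 1) * Real.log m))
          + Real.exp (-(t - 1) * Δ ^ 2 / 8)
        ≤ (δ * ε ^ 2 / T - γmin) / ((m : ℝ) * (γmin + Δ)) := by
  intro t ht
  set s := t - 1 with hsdef
  clear_value s
  have hm1 : (1:ℝ) < (m:ℝ) := by exact_mod_cast lt_of_lt_of_le one_lt_two hm
  have hm0 : (0:ℝ) < (m:ℝ) := by linarith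
  have hlogm : 0 < Real.log m := Real.log_pos hm1
  have hc1 : 0 < c - 1 := by linarith
  have hc0 : 0 < c := by linarith
  have hT0 : 0 < T := by linarith
  have hde : 0 < δ * ε ^ 2 := by positivity
  have hA0 : 0 < A := by
    rw [hA]
    apply mul_pos (by positivity)
    have : 0 < T * c * Δ / (δ * ε ^ 2) := by positivity
    linarith
  have hγΔ : 0 < γmin + Δ := by
    have : 0 < γmin := by rw [hγ]; positivity
    linarith
  -- RHS equals 2/A
  have hRHS : (δ * ε ^ 2 / T - γmin) / ((m : ℝ) * (γmin + Δ)) = 2 / A := by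
    have hden : (m : ℝ) * (γmin + Δ) ≠ 0 := by positivity
    rw [hγ] at *
    rw [hA]
    field_simp
  rw [hRHS]
  -- s ≥ 0
  have hs2 : (1 / (2 * Δ ^ 2 * Real.log m)) * (Real.log A) ^ 2 ≤ s :=
    le_trans (le_max_right _ _) ht
  have hs1 : (8 / Δ ^ 2) * Real.log A ≤ s := le_trans (le_max_left _ _) ht
  have hs0 : 0 ≤ s := le_trans (by positivity) hs2
  rcases le_or_gt 1 A with hA1 | hA1
  · have hlogA : 0 ≤ Real.log A := Real.log_nonneg hA1
    have h8 : 8 * Real.log A ≤ s * Δ ^ 2 := by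
      have h := mul_le_mul_of_nonneg_right hs1 (sq_nonneg Δ)
      have hΔ2 : Δ ^ 2 ≠ 0 := by positivity
      field_simp at h
      linarith
    have e2 : Real.exp (-s * Δ ^ 2 / 8) ≤ 1 / A := by
      rw [← Real.exp_log hA0, one_div, ← Real.exp_neg, Real.exp_le_exp]
      nlinarith [h8]
    have e1 : Real.exp (-Δ * Real.sqrt (2 * s * Real.log m)) ≤ 1 / A := by
      rw [← Real.exp_log hA0, one_div, ← Real.exp_neg, Real.exp_le_exp, neg_mul, neg_le_neg_iff]
      have h1 : (Real.log A / Δ) ^ 2 ≤ 2 * s * Real.log m := by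
        have h := mul_le_mul_of_nonneg_right hs2
          (le_of_lt (show (0:ℝ) < 2 * Δ ^ 2 * Real.log m by positivity))
        have hne : (2 * Δ ^ 2 * Real.log (m:ℝ)) ≠ 0 := by positivity
        rw [one_div, inv_mul_eq_div, div_mul_cancel₀ _ hne] at h
        rw [div_pow, div_le_iff₀ (by positivity : (0:ℝ) < Δ ^ 2)]
        nlinarith
      have h2 : Real.log A / Δ ≤ Real.sqrt (2 * s * Real.log m) := by
        have := Real.sqrt_le_sqrt h1
        rwa [Real.sqrt_sq (by positivity)] at this
      calc Real.log A = Δ * (Real.log A / Δ) := by field_simp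
        _ ≤ Δ * Real.sqrt (2 * s * Real.log m) := by
            exact mul_le_mul_of_nonneg_left h2 hΔ.le
    calc Real.exp (-Δ * Real.sqrt (2 * s * Real.log m)) + Real.exp (-s * Δ ^ 2 / 8)
        ≤ 1 / A + 1 / A := add_le_add e1 e2
      _ = 2 / A := by ring
  · have e1 : Real.exp (-Δ * Real.sqrt (2 * s * Real.log m)) ≤ 1 := by
      apply Real.exp_le_one_iff.mpr
      have h : 0 ≤ Δ * Real.sqrt (2 * s * Real.log m) :=
        mul_nonneg hΔ.le (Real.sqrt_nonneg _)
      linarith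
    have e2 : Real.exp (-s * Δ ^ 2 / 8) ≤ 1 := by
      apply Real.exp_le_one_iff.mpr
      have h : 0 ≤ s * Δ ^ 2 := mul_nonneg hs0 (sq_nonneg Δ)
      linarith
    have h1A : (1:ℝ) ≤ 1 / A := one_le_one_div hA0 hA1.le
    have h2A : (2:ℝ) ≤ 2 / A := by
      rw [div_eq_mul_one_div]
      linarith
    linarith [e1, e2, h2A]
end
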